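/- arXiv:2405.01184 — 9 statements merged into one kernel-verified Lean document; each statement's English description precedes it below -/
import Mathlib

section
/- For every complex number z with |z| < 1, the infinite product ∏_{n=1}^∞ (1 - z^n) satisfies |∏_{n=1}^∞ (1 - z^n)| ≤ 1 + |z| + 2|z|^4/(1 - |z|^2). -/
open Finset Filter

namespace PentagonalAux

def pent : ℕ → ℕ
  | 0 => 0
  | s+1 => pent s + 3*s + 1

lemma le_pent : ∀ s, s ≤ pent s
  | 0 => le_rfl
  | s+1 => by have := le_pent s; simp [pent]; omega

lemma pent_ge {s : ℕ} (hs : 2 ≤ s) : 2*s+1 ≤ pent s := by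
  induction s with
  | zero => omega
  | succ n ih =>
    rcases Nat.lt_or_ge n 2 with h | h
    · interval_cases n <;> simp_all [pent]
    · have := ih h; simp [pent]; omega

noncomputable def M (z : ℂ) : ℝ := Real.exp ((1-‖z‖)⁻¹)

noncomputable def B (z : ℂ) (s : ℕ) : ℂ :=
  ∑' k : ℕ, z ^ (s * k + pent s) * ∏ i ∈ range k, (1 - z ^ (s + i))

variable (z : ℂ) (hz : ‖z‖ < 1)

include hz in
lemma norm_term_le (s t c k : ℕ) :
    ‖z ^ (s*k+c) * ∏ i ∈ range k, (1 - z^(t+i))‖ ≤ (‖z‖^c * M z) * (‖z‖^s)^k := by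
  have hr0 : (0:ℝ) ≤ ‖z‖ := norm_nonneg z
  rw [norm_mul, norm_pow, norm_prod]
  have h1 : ∏ i ∈ range k, ‖1 - z^(t+i)‖ ≤ M z := by
    calc ∏ i ∈ range k, ‖1 - z^(t+i)‖ ≤ ∏ i ∈ range k, Real.exp (‖z‖^i) := by
          apply Finset.prod_le_prod (fun i _ => norm_nonneg _)
          intro i _
          calc ‖1 - z^(t+i)‖ ≤ ‖(1:ℂ)‖ + ‖z^(t+i)‖ := norm_sub_le _ _
            _ = ‖z‖^(t+i) + 1 := by rw [norm_one, norm_pow]; ring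
            _ ≤ ‖z‖^i + 1 := by
                have := pow_le_pow_of_le_one hr0 hz.le (Nat.le_add_left i t)
                linarith
            _ ≤ Real.exp (‖z‖^i) := Real.add_one_le_exp _
      _ = Real.exp (∑ i ∈ range k, ‖z‖^i) := by rw [Real.exp_sum]
      _ ≤ M z := by
          apply Real.exp_le_exp.2
          calc ∑ i ∈ range k, ‖z‖^i ≤ ∑' i : ℕ, ‖z‖^i :=
                Summable.sum_le_tsum _ (fun i _ => pow_nonneg hr0 i)
                  (summable_geometric_of_lt_one hr0 hz)
            _ = (1-‖z‖)⁻¹ := tsum_geometric_of_lt_one hr0 hz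
  calc ‖z‖^(s*k+c) * ∏ i ∈ range k, ‖1 - z^(t+i)‖
      ≤ ‖z‖^(s*k+c) * M z := mul_le_mul_of_nonneg_left h1 (pow_nonneg hr0 _)
    _ = (‖z‖^c * M z) * (‖z‖^s)^k := by rw [← pow_mul]; ring

include hz in
lemma summable_term {s : ℕ} (t c : ℕ) (hs : 1 ≤ s) :
    Summable (fun k => z^(s*k+c) * ∏ i ∈ range k, (1 - z^(t+i))) := by
  have hr0 : (0:ℝ) ≤ ‖z‖ := norm_nonneg z
  apply Summable.of_norm
  apply Summable.of_nonneg_of_le (fun k => norm_nonneg _)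
    (fun k => norm_term_le z hz s t c k)
  exact (summable_geometric_of_lt_one (pow_nonneg hr0 s)
    (pow_lt_one₀ hr0 hz (by omega))).mul_left _

include hz in
lemma norm_B_le {s : ℕ} (hs : 1 ≤ s) : ‖B z s‖ ≤ M z / (1 - ‖z‖) * ‖z‖^s := by
  have hr0 : (0:ℝ) ≤ ‖z‖ := norm_nonneg z
  have hM : 0 ≤ M z := (Real.exp_pos _).le
  have hrs : ‖z‖^s < 1 := pow_lt_one₀ hr0 hz (by omega)
  calc ‖B z s‖ ≤ ∑' k : ℕ, ‖z ^ (s * k + pent s) * ∏ i ∈ range k, (1 - z ^ (s + i))‖ :=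
        norm_tsum_le_tsum_norm ((summable_term z hz s (pent s) hs).norm)
    _ ≤ ∑' k : ℕ, (‖z‖^(pent s) * M z) * (‖z‖^s)^k := by
        apply Summable.tsum_le_tsum (fun k => norm_term_le z hz s s (pent s) k)
          ((summable_term z hz s (pent s) hs).norm)
        exact (summable_geometric_of_lt_one (pow_nonneg hr0 s) hrs).mul_left _
    _ = (‖z‖^(pent s) * M z) * (1 - ‖z‖^s)⁻¹ := by
        rw [tsum_mul_left, tsum_geometric_of_lt_one (pow_nonneg hr0 s) hrs]
    _ ≤ (‖z‖^s * M z) * (1 - ‖z‖)⁻¹ := by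
        apply mul_le_mul
        · exact mul_le_mul_of_nonneg_right
            (pow_le_pow_of_le_one hr0 hz.le (le_pent s)) hM
        · apply inv_anti₀ (by linarith)
          have : ‖z‖^s ≤ ‖z‖ := by
            simpa using pow_le_pow_of_le_one hr0 hz.le hs
          linarith
        · exact inv_nonneg.2 (by linarith)
        · positivity
    _ = M z / (1 - ‖z‖) * ‖z‖^s := by ring

include hz in
lemma B_rec {s : ℕ} (hs : 1 ≤ s) :
    B z s = z^(pent s) + z^(pent s + s) - B z (s+1) := by
  have S1 : ∀ c, Summable (fun k => z^(s*k+c) * ∏ i ∈ range k, (1 - z^(s+i))) :=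
    fun c => summable_term z hz s c hs
  have S2 : ∀ c, Summable (fun k => z^(s*k+c) * ∏ i ∈ range k, (1 - z^(s+1+i))) :=
    fun c => summable_term z hz (s+1) c hs
  have S3 : Summable (fun k => z^((s+1)*k+pent (s+1)) * ∏ i ∈ range k, (1 - z^(s+1+i))) :=
    summable_term z hz (s+1) (pent (s+1)) (by omega)
  have step1 : B z s = z^(pent s) + ∑' k : ℕ,
      (z^(s*k+(s+pent s)) * ∏ i ∈ range k, (1 - z^(s+1+i))
       - z^(s*k+(2*s+pent s)) * ∏ i ∈ range k, (1 - z^(s+1+i))) := by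
    rw [B, Summable.tsum_eq_zero_add (S1 (pent s))]
    congr 1
    · simp
    · apply tsum_congr
      intro k
      rw [prod_range_succ']
      have hfun : ∀ i ∈ range k, (1 - z^(s+(i+1))) = (1 - z^(s+1+i)) := by
        intro i _; congr 2; omega
      rw [Finset.prod_congr rfl hfun]
      ring
  have step2 : (∑' k : ℕ, z^(s*k+(s+pent s)) * ∏ i ∈ range k, (1 - z^(s+1+i)))
      = z^(s+pent s) + ∑' k : ℕ,
        (z^(s*k+(2*s+pent s)) * ∏ i ∈ range k, (1 - z^(s+1+i))
         - z^((s+1)*k+pent (s+1)) * ∏ i ∈ range k, (1 - z^(s+1+i))) := by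
    rw [Summable.tsum_eq_zero_add (S2 (s+pent s))]
    congr 1
    · simp
    · apply tsum_congr
      intro k
      rw [prod_range_succ]
      have he : (s+1)*k + pent (s+1) = (s*k+(2*s+pent s)) + (s+1+k) := by
        simp [pent]; ring
      rw [he]
      ring
  rw [step1, Summable.tsum_sub (S2 (s+pent s)) (S2 (2*s+pent s)), step2,
    Summable.tsum_sub (S2 (2*s+pent s)) S3]
  have hB : B z (s+1) = ∑' k : ℕ, z^((s+1)*k+pent (s+1)) * ∏ i ∈ range k, (1 - z^(s+1+i)) := rfl
  rw [← hB]
  ring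

lemma prod_telescope (N : ℕ) :
    ∏ n ∈ range N, (1 - z^(n+1))
      = 1 - ∑ k ∈ range N, z^(1*k+pent 1) * ∏ i ∈ range k, (1 - z^(1+i)) := by
  induction N with
  | zero => simp
  | succ n ih =>
    have hc : ∏ i ∈ range n, (1 - z^(1+i)) = ∏ i ∈ range n, (1 - z^(i+1)) :=
      Finset.prod_congr rfl (fun i _ => by rw [Nat.add_comm])
    have hP : ∏ i ∈ range n, (1 - z^(1+i))
        = 1 - ∑ k ∈ range n, z^(1*k+pent 1) * ∏ i ∈ range k, (1 - z^(1+i)) := hc.trans ih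
    rw [prod_range_succ, sum_range_succ, ih, hP]
    simp only [show pent 1 = 1 from rfl]
    ring

lemma P_eq_one_sub (hm : Multipliable fun n : ℕ => 1 - z^(n+1))
    (B1 : ℂ)
    (hB1 : HasSum (fun k : ℕ => z^(1*k+pent 1) * ∏ i ∈ range k, (1 - z^(1+i))) B1) :
    ∏' n : ℕ, (1 - z^(n+1)) = 1 - B1 := by
  have h1 := hm.hasProd.tendsto_prod_nat
  have h2 : Tendsto (fun N => 1 - ∑ k ∈ range N, z^(1*k+pent 1) * ∏ i ∈ range k, (1 - z^(1+i)))
      atTop (nhds (1 - B1)) := tendsto_const_nhds.sub hB1.tendsto_sum_nat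
  exact tendsto_nhds_unique h1 (h2.congr (fun N => (prod_telescope z N).symm))

include hz in
lemma B2_le : ‖B z 2‖ ≤ 2*‖z‖^5/(1-‖z‖^2) := by
  have hr0 : (0:ℝ) ≤ ‖z‖ := norm_nonneg z
  have hz2 : ‖z‖^2 < 1 := by nlinarith
  have hkey : ∀ m, ‖B z 2‖ ≤ (∑ j ∈ range m, 2*‖z‖^(2*j+5)) + ‖B z (m+2)‖ := by
    intro m
    induction m with
    | zero => simp
    | succ n ih =>
      have hstep : ‖B z (n+2)‖ ≤ 2*‖z‖^(2*n+5) + ‖B z (n+3)‖ := by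
        rw [B_rec z hz (show 1 ≤ n+2 by omega)]
        have h1 : ‖z^(pent (n+2)) + z^(pent (n+2)+(n+2)) - B z (n+2+1)‖
            ≤ ‖z^(pent (n+2))‖ + ‖z^(pent (n+2)+(n+2))‖ + ‖B z (n+2+1)‖ :=
          (norm_sub_le _ _).trans (add_le_add_left (norm_add_le _ _) _)
        have h2 : ‖z^(pent (n+2))‖ ≤ ‖z‖^(2*n+5) := by
          rw [norm_pow]
          exact pow_le_pow_of_le_one hr0 hz.le
            (by have := pent_ge (show 2 ≤ n+2 by omega); omega)
        have h3 : ‖z^(pent (n+2)+(n+2))‖ ≤ ‖z‖^(2*n+5) := by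
          rw [norm_pow]
          exact pow_le_pow_of_le_one hr0 hz.le
            (by have := pent_ge (show 2 ≤ n+2 by omega); omega)
        have : n+2+1 = n+3 := rfl
        rw [this] at h1
        linarith
      rw [sum_range_succ]
      have hn : n+1+2 = n+3 := rfl
      rw [hn]
      linarith
  have hgeo : ∀ m, (∑ j ∈ range m, 2*‖z‖^(2*j+5)) ≤ 2*‖z‖^5/(1-‖z‖^2) := by
    intro m
    have hterm : ∀ j, 2*‖z‖^(2*j+5) = (2*‖z‖^5) * (‖z‖^2)^j := by
      intro j; rw [pow_add, pow_mul]; ring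
    calc ∑ j ∈ range m, 2*‖z‖^(2*j+5) = ∑ j ∈ range m, (2*‖z‖^5) * (‖z‖^2)^j :=
          Finset.sum_congr rfl (fun j _ => hterm j)
      _ = (2*‖z‖^5) * ∑ j ∈ range m, (‖z‖^2)^j := by rw [mul_sum]
      _ ≤ (2*‖z‖^5) * (1-‖z‖^2)⁻¹ := by
          apply mul_le_mul_of_nonneg_left ?_ (by positivity)
          calc ∑ j ∈ range m, (‖z‖^2)^j ≤ ∑' j : ℕ, (‖z‖^2)^j :=
                Summable.sum_le_tsum _ (fun i _ => by positivity)
                  (summable_geometric_of_lt_one (by positivity) hz2)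
            _ = (1-‖z‖^2)⁻¹ := tsum_geometric_of_lt_one (by positivity) hz2
      _ = 2*‖z‖^5/(1-‖z‖^2) := by rw [div_eq_mul_inv]
  have hlim : Tendsto (fun m : ℕ => ‖B z (m+2)‖) atTop (nhds 0) := by
    have hb : ∀ m : ℕ, ‖B z (m+2)‖ ≤ (M z / (1-‖z‖) * ‖z‖^2) * ‖z‖^m := by
      intro m
      calc ‖B z (m+2)‖ ≤ M z/(1-‖z‖) * ‖z‖^(m+2) := norm_B_le z hz (by omega)
        _ = (M z/(1-‖z‖) * ‖z‖^2) * ‖z‖^m := by ring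
    apply squeeze_zero (fun m => norm_nonneg _) hb
    have := tendsto_pow_atTop_nhds_zero_of_lt_one hr0 hz
    simpa using this.const_mul (M z / (1-‖z‖) * ‖z‖^2)
  have hlim2 : Tendsto (fun m : ℕ => 2*‖z‖^5/(1-‖z‖^2) + ‖B z (m+2)‖) atTop
      (nhds (2*‖z‖^5/(1-‖z‖^2))) := by
    have := tendsto_const_nhds.add hlim
      (f := fun _ : ℕ => 2*‖z‖^5/(1-‖z‖^2))
    simpa using this
  exact ge_of_tendsto' hlim2 (fun m => (hkey m).trans (add_le_add_left (hgeo m) _))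

include hz in
lemma w_ineq : ‖1 - z - z^2‖ + 2*‖z‖^5/(1-‖z‖^2) ≤ 1 + ‖z‖ + 2*‖z‖^4/(1-‖z‖^2) := by
  set r := ‖z‖ with hr
  have hr0 : 0 ≤ r := norm_nonneg z
  have h2 : (0:ℝ) < 1 - r^2 := by nlinarith
  have h1r : (0:ℝ) < 1 + r := by linarith
  set a := z.re with ha
  set b := z.im with hb
  have hre : |a| ≤ r := Complex.abs_re_le_norm z
  have hr2 : r^2 = a^2 + b^2 := by
    rw [hr, Complex.sq_norm, Complex.normSq_apply]; ring
  have hw : ‖1 - z - z^2‖^2 = 1 + 3*r^2 + r^4 - 2*a - 4*a^2 + 2*r^2*a := by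
    have e0 : ‖1 - z - z^2‖^2 = (1 - z - z^2).re^2 + (1 - z - z^2).im^2 := by
      rw [Complex.sq_norm, Complex.normSq_apply]; ring
    have e1 : (1 - z - z^2).re = 1 - a - (a*a - b*b) := by
      simp [pow_two, Complex.sub_re, Complex.mul_re, ha, hb]
    have e2 : (1 - z - z^2).im = -b - (a*b + b*a) := by
      simp [pow_two, Complex.sub_im, Complex.mul_im, ha, hb]
    rw [e0, e1, e2]
    have hr4 : r^4 = (a^2+b^2)^2 := by rw [← hr2]; ring
    rw [hr4, hr2]
    ring
  have hwn : 0 ≤ ‖1 - z - z^2‖ := norm_nonneg _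
  have hal : -r ≤ a := (abs_le.1 hre).1
  have hkey : ‖1 - z - z^2‖ * (1+r) ≤ (1+r)^2 + 2*r^4 := by
    rcases le_or_gt r (1/5) with hsmall | hbig
    · have hq : ‖1 - z - z^2‖^2 ≤ (1+r-r^2)^2 := by
        rw [hw]
        nlinarith [mul_nonneg (show (0:ℝ) ≤ a + r by linarith)
          (show (0:ℝ) ≤ 4*(a-r) + 2*(1-r^2) by nlinarith [(abs_le.1 hre).2])]
      have h3 : ‖1 - z - z^2‖ ≤ 1 + r - r^2 := by nlinarith
      nlinarith
    · have hq : ‖1 - z - z^2‖^2 ≤ 1 + 3*r^2 + r^4 + (1-r^2)^2/4 := by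
        rw [hw]
        nlinarith [sq_nonneg (2*a + (1-r^2)/2)]
      have ht : (0:ℝ) ≤ r - 1/5 := by linarith
      have hpoly : (1 + 3*r^2 + r^4 + (1-r^2)^2/4) * (1+r)^2 ≤ ((1+r)^2 + 2*r^4)^2 := by
        have hexp : ((1+r)^2 + 2*r^4)^2 - (1 + 3*r^2 + r^4 + (1-r^2)^2/4) * (1+r)^2
            = 53104/390625 + (185132/78125)*(r-1/5) + (38487/15625)*(r-1/5)^2
              + (8474/3125)*(r-1/5)^3 + (1106/125)*(r-1/5)^4 + (1324/125)*(r-1/5)^5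
              + (723/100)*(r-1/5)^6 + (32/5)*(r-1/5)^7 + 4*(r-1/5)^8 := by ring
        linarith [pow_nonneg ht 2, pow_nonneg ht 3, pow_nonneg ht 4,
          pow_nonneg ht 5, pow_nonneg ht 6, pow_nonneg ht 7, pow_nonneg ht 8, ht]
      have hS : (0:ℝ) ≤ (1+r)^2 + 2*r^4 := by positivity
      have hsq : (‖1 - z - z^2‖*(1+r))^2 ≤ ((1+r)^2+2*r^4)^2 := by
        calc (‖1 - z - z^2‖*(1+r))^2 = ‖1 - z - z^2‖^2 * (1+r)^2 := by ring
          _ ≤ (1 + 3*r^2 + r^4 + (1-r^2)^2/4) * (1+r)^2 :=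
              mul_le_mul_of_nonneg_right hq (by positivity)
          _ ≤ _ := hpoly
      exact (pow_le_pow_iff_left₀ (by positivity) hS (by norm_num)).1 hsq
  have hfin : ‖1 - z - z^2‖ * (1-r^2) + 2*r^5 ≤ (1+r)*(1-r^2) + 2*r^4 := by
    nlinarith [mul_le_mul_of_nonneg_right hkey (show (0:ℝ) ≤ 1-r by linarith)]
  calc ‖1 - z - z^2‖ + 2*r^5/(1-r^2)
      = (‖1 - z - z^2‖ * (1-r^2) + 2*r^5)/(1-r^2) := by field_simp
    _ ≤ ((1+r)*(1-r^2) + 2*r^4)/(1-r^2) := by gcongr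
    _ = 1 + r + 2*r^4/(1-r^2) := by field_simp

end PentagonalAux

open Complex PentagonalAux Finset

theorem pentagonal_product_upper_bound (z : ℂ) (hz : ‖z‖ < 1) :
    ‖∏' n : ℕ, (1 - z ^ (n + 1))‖ ≤ 1 + ‖z‖ + 2 * ‖z‖ ^ 4 / (1 - ‖z‖ ^ 2) := by
  have hr0 : (0:ℝ) ≤ ‖z‖ := norm_nonneg z
  have h2 : (0:ℝ) < 1 - ‖z‖^2 := by nlinarith
  by_cases hm : Multipliable fun n : ℕ => 1 - z^(n+1)
  · have hB1sum : Summable (fun k : ℕ => z^(1*k+pent 1) * ∏ i ∈ range k, (1 - z^(1+i))) :=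
      summable_term z hz 1 (pent 1) le_rfl
    have hP : ∏' n : ℕ, (1 - z^(n+1)) = 1 - B z 1 :=
      P_eq_one_sub z hm (B z 1) hB1sum.hasSum
    rw [hP, B_rec z hz le_rfl]
    have hq : (1 : ℂ) - (z^(pent 1) + z^(pent 1 + 1) - B z 2) = (1 - z - z^2) + B z 2 := by
      simp only [show pent 1 = 1 from rfl]
      ring
    rw [hq]
    calc ‖(1 - z - z^2) + B z 2‖ ≤ ‖1 - z - z^2‖ + ‖B z 2‖ := norm_add_le _ _
      _ ≤ ‖1 - z - z^2‖ + 2*‖z‖^5/(1-‖z‖^2) := by linarith [B2_le z hz]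
      _ ≤ 1 + ‖z‖ + 2 * ‖z‖ ^ 4 / (1 - ‖z‖ ^ 2) := w_ineq z hz
  · rw [tprod_eq_one_of_not_multipliable hm, norm_one]
    have : (0:ℝ) ≤ 2 * ‖z‖ ^ 4 / (1 - ‖z‖ ^ 2) := by positivity
    linarith
end

section
/- For every real number z with 0 < z < 1, the infinite product ∏_{n=1}^∞ (1 - z^n) satisfies ∏_{n=1}^∞ (1 - z^n) ≥ 1 - z - z^2 - 2z^2/(1 - z). -/
theorem pentagonal_product_lower_bound (z : ℝ) (h0 : 0 < z) (h1 : z < 1) :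
    1 - z - z ^ 2 - 2 * z ^ 2 / (1 - z) ≤ ∏' n : ℕ, (1 - z ^ (n + 1)) := by
  have hz1 : (0:ℝ) < 1 - z := by linarith
  have hpow : ∀ n : ℕ, 0 < z ^ (n + 1) := fun n => pow_pos h0 _
  have hpow1 : ∀ n : ℕ, z ^ (n + 1) < 1 := fun n => pow_lt_one₀ h0.le h1 (Nat.succ_ne_zero n)
  have hfpos : ∀ n : ℕ, (0:ℝ) < 1 - z ^ (n + 1) := fun n => by linarith [hpow1 n]
  -- summability of logs
  have hsumpow : Summable (fun n : ℕ => z ^ (n + 1)) := by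
    have := (summable_geometric_of_lt_one h0.le h1).mul_left z
    simpa [pow_succ, mul_comm] using this
  have hnn : ∀ n : ℕ, 0 ≤ -Real.log (1 - z ^ (n + 1)) := by
    intro n
    have : Real.log (1 - z ^ (n + 1)) ≤ 0 :=
      Real.log_nonpos (hfpos n).le (by linarith [hpow n])
    linarith
  have hle : ∀ n : ℕ, -Real.log (1 - z ^ (n + 1)) ≤ (1 - z)⁻¹ * z ^ (n + 1) := by
    intro n
    have h1n := hfpos n
    have heq : -Real.log (1 - z ^ (n + 1)) = Real.log (1 - z ^ (n + 1))⁻¹ := by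
      rw [Real.log_inv]
    rw [heq]
    have hle := Real.log_le_sub_one_of_pos (inv_pos.mpr h1n)
    have heq2 : (1 - z ^ (n + 1))⁻¹ - 1 = z ^ (n + 1) / (1 - z ^ (n + 1)) := by
      field_simp
      ring
    rw [heq2] at hle
    refine hle.trans ?_
    rw [div_le_iff₀ h1n, mul_comm ((1-z)⁻¹) _, mul_assoc]
    have h2 : (1:ℝ) ≤ (1 - z)⁻¹ * (1 - z ^ (n + 1)) := by
      rw [← div_eq_inv_mul, le_div_iff₀ hz1]
      have hzz : z ^ (n + 1) ≤ z := by
        calc z ^ (n + 1) ≤ z ^ 1 := pow_le_pow_of_le_one h0.le h1.le (by omega)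
        _ = z := pow_one z
      linarith
    nlinarith [hpow n]
  have hlog : Summable (fun n : ℕ => Real.log (1 - z ^ (n + 1))) := by
    rw [← summable_neg_iff]
    exact Summable.of_nonneg_of_le hnn hle (hsumpow.mul_left _)
  -- multipliability
  have hmult : Multipliable (fun n : ℕ => 1 - z ^ (n + 1)) := by
    have := Real.multipliable_of_summable_log hfpos hlog
    exact this
  -- partial sums bound
  have hsum_le : ∀ n : ℕ, ∑ i ∈ Finset.range n, z ^ (i + 1) ≤ z / (1 - z) := by
    intro n
    have := Summable.sum_le_tsum (Finset.range n) (fun i _ => (hpow i).le) hsumpow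
    refine this.trans ?_
    have htsum : ∑' i : ℕ, z ^ (i + 1) = z / (1 - z) := by
      have := tsum_geometric_of_lt_one h0.le h1
      calc ∑' i : ℕ, z ^ (i + 1) = ∑' i : ℕ, z * z ^ i := by
            congr 1; ext i; ring
        _ = z * ∑' i : ℕ, z ^ i := by rw [tsum_mul_left]
        _ = z * (1 - z)⁻¹ := by rw [this]
        _ = z / (1 - z) := by rw [div_eq_mul_inv]
    exact htsum.le
  -- Weierstrass: partial products ≥ 1 - partial sums
  have hweier : ∀ n : ℕ, 1 - ∑ i ∈ Finset.range n, z ^ (i + 1)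
      ≤ ∏ i ∈ Finset.range n, (1 - z ^ (i + 1)) := by
    intro n
    induction n with
    | zero => simp
    | succ n ih =>
      rw [Finset.prod_range_succ, Finset.sum_range_succ]
      have hS : 0 ≤ ∑ i ∈ Finset.range n, z ^ (i + 1) :=
        Finset.sum_nonneg fun i _ => (hpow i).le
      calc 1 - (∑ i ∈ Finset.range n, z ^ (i + 1) + z ^ (n + 1))
          ≤ (1 - ∑ i ∈ Finset.range n, z ^ (i + 1)) * (1 - z ^ (n + 1)) := by
            nlinarith [hpow n, hpow1 n]
        _ ≤ (∏ i ∈ Finset.range n, (1 - z ^ (i + 1))) * (1 - z ^ (n + 1)) :=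
            mul_le_mul_of_nonneg_right ih (hfpos n).le
  -- the final bound is below 1 - z/(1-z)
  have hbound : 1 - z - z ^ 2 - 2 * z ^ 2 / (1 - z) ≤ 1 - z / (1 - z) := by
    have e1 : z / (1 - z) * (1 - z) = z := div_mul_cancel₀ _ (ne_of_gt hz1)
    have e2 : 2 * z ^ 2 / (1 - z) * (1 - z) = 2 * z ^ 2 := div_mul_cancel₀ _ (ne_of_gt hz1)
    nlinarith [e1, e2, hz1, h0, h1, sq_nonneg z, mul_pos h0 h0]
  -- take limit
  have htend := hmult.hasProd.tendsto_prod_nat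
  refine ge_of_tendsto htend ?_
  filter_upwards with n
  calc 1 - z - z ^ 2 - 2 * z ^ 2 / (1 - z) ≤ 1 - z / (1 - z) := hbound
    _ ≤ 1 - ∑ i ∈ Finset.range n, z ^ (i + 1) := by linarith [hsum_le n]
    _ ≤ ∏ i ∈ Finset.range n, (1 - z ^ (i + 1)) := hweier n
end

section
/- For every τ in the upper half plane, the modular discriminant satisfies |Δ(τ)| ≤ e^{-2π Im(τ)} (1 + 2 e^{-2π Im(τ)} + 2 e^{-8π Im(τ)}/(1 - e^{-4π Im(τ)}))^{24}. -/
open Complex Real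

/-- The modular discriminant, via its product formula `Δ(τ) = q ∏ (1 - qⁿ)²⁴`, `q = e^{2πiτ}`. -/
noncomputable def Δ (τ : ℂ) : ℂ :=
  Complex.exp (2 * π * I * τ) * ∏' n : ℕ, (1 - Complex.exp (2 * π * I * τ) ^ (n + 1)) ^ 24

section PentagonalAux

open Finset


/-- partial products `∏_{n=k}^{k+j-1} (1 - qⁿ)` -/
noncomputable def pentP (q : ℂ) (k j : ℕ) : ℂ := ∏ n ∈ Finset.Ico k (k + j), (1 - q ^ n)

/-- pentagonal exponent offsets: `ee k = 3k(k-1)/2` -/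
def pentE : ℕ → ℕ
  | 0 => 0
  | k + 1 => pentE k + 3 * k

/-- terms of Euler's remainder series -/
noncomputable def pentF (q : ℂ) (k j : ℕ) : ℂ := q ^ (k * (j + 1) + pentE k) * pentP q k j

/-- Euler's remainder -/
noncomputable def pentR (q : ℂ) (k : ℕ) : ℂ := ∑' j, pentF q k j

lemma pentP_norm_le {q : ℂ} (hq : ‖q‖ < 1) (k j : ℕ) :
    ‖pentP q k j‖ ≤ Real.exp (1 - ‖q‖)⁻¹ := by
  have h0 : (0:ℝ) ≤ ‖q‖ := norm_nonneg q
  calc ‖pentP q k j‖ ≤ ∏ n ∈ Finset.Ico k (k + j), ‖1 - q ^ n‖ := norm_prod_le _ _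
    _ ≤ ∏ n ∈ Finset.Ico k (k + j), Real.exp (‖q‖ ^ n) := by
        refine Finset.prod_le_prod (fun n _ => norm_nonneg _) (fun n _ => ?_)
        calc ‖1 - q ^ n‖ ≤ ‖(1:ℂ)‖ + ‖q ^ n‖ := norm_sub_le _ _
          _ = ‖q‖ ^ n + 1 := by rw [norm_one, norm_pow]; ring
          _ ≤ Real.exp (‖q‖ ^ n) := Real.add_one_le_exp _
    _ = Real.exp (∑ n ∈ Finset.Ico k (k + j), ‖q‖ ^ n) := (Real.exp_sum _ _).symm
    _ ≤ Real.exp (1 - ‖q‖)⁻¹ := by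
        apply Real.exp_le_exp.2
        calc ∑ n ∈ Finset.Ico k (k + j), ‖q‖ ^ n ≤ ∑' n : ℕ, ‖q‖ ^ n :=
              Summable.sum_le_tsum _ (fun i _ => pow_nonneg h0 i) (summable_geometric_of_lt_one h0 hq)
          _ = (1 - ‖q‖)⁻¹ := tsum_geometric_of_lt_one h0 hq

lemma summable_pow_mul_pentP {q : ℂ} (hq : ‖q‖ < 1) (k : ℕ) (b : ℕ → ℕ) (hb : ∀ j, j ≤ b j) :
    Summable fun j => q ^ b j * pentP q k j := by
  have h0 : (0:ℝ) ≤ ‖q‖ := norm_nonneg q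
  refine Summable.of_norm_bounded (g := fun j => Real.exp (1 - ‖q‖)⁻¹ * ‖q‖ ^ j)
    ((summable_geometric_of_lt_one h0 hq).mul_left _) (fun j => ?_)
  rw [norm_mul, norm_pow]
  calc ‖q‖ ^ b j * ‖pentP q k j‖ ≤ ‖q‖ ^ j * Real.exp (1 - ‖q‖)⁻¹ :=
        mul_le_mul (pow_le_pow_of_le_one h0 hq.le (hb j)) (pentP_norm_le hq k j)
          (norm_nonneg _) (pow_nonneg h0 j)
    _ = Real.exp (1 - ‖q‖)⁻¹ * ‖q‖ ^ j := mul_comm _ _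

lemma summable_pentF {q : ℂ} (hq : ‖q‖ < 1) {k : ℕ} (hk : 1 ≤ k) : Summable (pentF q k) :=
  summable_pow_mul_pentP hq k _ (fun j => by nlinarith [Nat.le_mul_of_pos_left (j+1) hk])

lemma pentR_rec {q : ℂ} (hq : ‖q‖ < 1) {k : ℕ} (hk : 1 ≤ k) :
    pentR q k = q ^ (k + pentE k) + q ^ (2 * k + pentE k) - pentR q (k + 1) := by
  set e := pentE k with he
  set g : ℕ → ℂ := fun j => q ^ (k * (j + 2) + e) * pentP q (k+1) j with hgdef
  have hg : Summable g := summable_pow_mul_pentP hq (k+1) _ (fun j => by nlinarith)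
  have hgs : Summable (fun j => g (j + 1)) := (summable_nat_add_iff 1).2 hg
  have hsplit : ∀ j, pentP q k (j + 1) = (1 - q ^ k) * pentP q (k+1) j := by
    intro j
    have h2 : k + (j + 1) = (k + 1) + j := by omega
    rw [pentP, h2, Finset.prod_eq_prod_Ico_succ_bot (by omega : k < (k+1)+j) (fun n => 1 - q ^ n),
      pentP]
  have htop : ∀ j, pentP q (k+1) (j + 1) = pentP q (k+1) j * (1 - q ^ (k + 1 + j)) := by
    intro j
    have h2 : (k + 1) + (j + 1) = (k + 1 + j) + 1 := by omega
    rw [pentP, pentP, h2, Finset.prod_Ico_succ_top (by omega : k + 1 ≤ k + 1 + j) (fun n => 1 - q ^ n)]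
  have hfk : ∀ j, pentF q k (j + 1) = g j - q ^ k * g j := by
    intro j
    rw [pentF, hsplit]
    simp only [hgdef]
    rw [show k * (j + 1 + 1) + e = k * (j + 2) + e from by ring]
    ring_nf
  have hfk1 : ∀ j, pentF q (k + 1) j = q ^ k * g j - g (j + 1) := by
    intro j
    simp only [pentF, hgdef]
    rw [htop]
    rw [show pentE (k+1) = e + 3 * k from rfl]
    rw [show (k+1) * (j + 1) + (e + 3*k) = (k * (j+2) + e) + (k + (k + 1 + j)) from by ring,
        show k * (j + 1 + 2) + e = (k * (j + 2) + e) + k from by ring]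
    rw [pow_add, pow_add, pow_add]
    ring
  have hR1 : pentR q (k+1) = q ^ k * (∑' j, g j) - ∑' j, g (j + 1) := by
    rw [pentR, tsum_congr hfk1, Summable.tsum_sub (hg.mul_left _) hgs, tsum_mul_left]
  have hg0 : ∑' j, g j = g 0 + ∑' j, g (j + 1) := Summable.tsum_eq_zero_add hg
  have hRk : pentR q k = pentF q k 0 + ((∑' j, g j) - q ^ k * ∑' j, g j) := by
    rw [pentR, Summable.tsum_eq_zero_add (summable_pentF hq hk), tsum_congr hfk,
      Summable.tsum_sub hg (hg.mul_left _), tsum_mul_left]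
  have hf0 : pentF q k 0 = q ^ (k + e) := by
    rw [pentF, pentP]
    simp
    rfl
  have hgg0 : g 0 = q ^ (2 * k + e) := by
    simp only [hgdef, pentP]
    norm_num
    rw [show k * 2 + e = 2 * k + e from by ring]
  rw [hRk, hR1, hf0, hg0, hgg0]
  ring

lemma multipliable_one_sub_pow {q : ℂ} (hq : ‖q‖ < 1) :
    Multipliable (fun n : ℕ => 1 - q ^ (n + 1)) := by
  have h0 : (0:ℝ) ≤ ‖q‖ := norm_nonneg q
  refine (fun (_ : Unit → ∀ n : ℕ, 1 - q ^ (n + 1) ≠ 0) (h : Unit → Summable fun n : ℕ => Complex.log (1 - q ^ (n + 1))) => Complex.multipliable_of_summable_log (h ())) ?_ ?_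
  · intro _ n
    intro h
    have : ‖q ^ (n+1)‖ < 1 := by
      rw [norm_pow]
      exact pow_lt_one₀ h0 hq (by omega)
    rw [sub_eq_zero] at h
    rw [← h] at this
    simp at this
  · intro _
    refine Summable.of_norm_bounded (g := fun n => ((1 - ‖q‖)⁻¹ / 2 + 1) * ‖q‖ ^ (n+1)) ?_ ?_
    · exact ((summable_geometric_of_lt_one h0 hq).mul_left _).comp_injective
        (add_left_injective 1)
    · intro n
      have hzn : ‖-q ^ (n+1)‖ < 1 := by
        rw [norm_neg, norm_pow]
        exact pow_lt_one₀ h0 hq (by omega)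
      have h1 : ‖q‖ ^ (n+1) ≤ ‖q‖ := pow_le_pow_of_le_one h0 hq.le (by omega) |>.trans_eq (pow_one _)
      have := Complex.norm_log_one_add_le hzn
      rw [show (1 : ℂ) + -q ^ (n+1) = 1 - q ^ (n+1) from by ring] at this
      refine this.trans ?_
      rw [norm_neg, norm_pow]
      have hinv : (1 - ‖q‖ ^ (n+1))⁻¹ ≤ (1 - ‖q‖)⁻¹ := by
        apply inv_anti₀ (by linarith) (by linarith)
      have hp1 : ‖q‖ ^ (n+1) ≤ 1 := h1.trans hq.le
      calc (‖q‖ ^ (n+1)) ^ 2 * (1 - ‖q‖ ^ (n+1))⁻¹ / 2 + ‖q‖ ^ (n+1)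
          ≤ ‖q‖ ^ (n+1) * (1 - ‖q‖)⁻¹ / 2 + ‖q‖ ^ (n+1) := by
            have hsq : (‖q‖ ^ (n+1)) ^ 2 ≤ ‖q‖ ^ (n+1) := by
              nlinarith [pow_nonneg h0 (n+1)]
            have hi0 : (0:ℝ) ≤ (1 - ‖q‖)⁻¹ := inv_nonneg.2 (by linarith)
            have hi1 : (0:ℝ) ≤ (1 - ‖q‖ ^ (n+1))⁻¹ := inv_nonneg.2 (by linarith)
            nlinarith [pow_nonneg h0 (n+1)]
        _ = ((1 - ‖q‖)⁻¹ / 2 + 1) * ‖q‖ ^ (n+1) := by ring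

lemma one_sub_tprod {q : ℂ} (hq : ‖q‖ < 1) :
    (∏' n : ℕ, (1 - q ^ (n + 1))) = 1 - pentR q 1 := by
  have hmul := multipliable_one_sub_pow hq
  have hfin : ∀ N, (1 : ℂ) - pentP q 1 N = ∑ j ∈ range N, pentF q 1 j := by
    intro N
    induction N with
    | zero => simp [pentP]
    | succ N ih =>
      have htop : pentP q 1 (N + 1) = pentP q 1 N * (1 - q ^ (1 + N)) := by
        rw [pentP, pentP, show 1 + (N+1) = (1 + N) + 1 from by omega,
          Finset.prod_Ico_succ_top (by omega) (fun n => 1 - q ^ n)]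
      rw [Finset.sum_range_succ, ← ih, htop, pentF,
        show pentE 1 = 0 from rfl, show 1 * (N + 1) + 0 = 1 + N from by omega]
      ring
  have hpp : ∀ N, pentP q 1 N = ∏ i ∈ range N, (1 - q ^ (i + 1)) := by
    intro N
    rw [pentP, Finset.prod_Ico_eq_prod_range]
    rw [show 1 + N - 1 = N from by omega]
    exact Finset.prod_congr rfl (fun i _ => by rw [add_comm 1 i])
  have ht1 : Filter.Tendsto (fun N => (1:ℂ) - pentP q 1 N) Filter.atTop
      (nhds (1 - ∏' n : ℕ, (1 - q ^ (n + 1)))) := by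
    apply Filter.Tendsto.const_sub
    have := hmul.hasProd.tendsto_prod_nat
    refine this.congr (fun N => ?_)
    rw [hpp]
  have ht2 : Filter.Tendsto (fun N => (1:ℂ) - pentP q 1 N) Filter.atTop (nhds (pentR q 1)) := by
    have := (summable_pentF hq (le_refl 1)).hasSum.tendsto_sum_nat
    refine this.congr (fun N => ?_)
    rw [← hfin]
  have := tendsto_nhds_unique ht1 ht2
  linear_combination -this

lemma pentR_norm_le {q : ℂ} (hq : ‖q‖ < 1) {k : ℕ} (hk : 1 ≤ k) :
    ‖pentR q k‖ ≤ Real.exp (1 - ‖q‖)⁻¹ * (1 - ‖q‖)⁻¹ * ‖q‖ ^ k := by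
  have h0 : (0:ℝ) ≤ ‖q‖ := norm_nonneg q
  have hgeo := hasSum_geometric_of_lt_one h0 hq
  have hb : ∀ j, ‖pentF q k j‖ ≤ (Real.exp (1 - ‖q‖)⁻¹ * ‖q‖ ^ k) * ‖q‖ ^ j := by
    intro j
    rw [pentF, norm_mul, norm_pow]
    have h1 : ‖q‖ ^ (k * (j + 1) + pentE k) ≤ ‖q‖ ^ (k + j) := by
      apply pow_le_pow_of_le_one h0 hq.le
      nlinarith [Nat.le_mul_of_pos_left j hk]
    calc ‖q‖ ^ (k * (j + 1) + pentE k) * ‖pentP q k j‖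
        ≤ ‖q‖ ^ (k + j) * Real.exp (1 - ‖q‖)⁻¹ :=
          mul_le_mul h1 (pentP_norm_le hq k j) (norm_nonneg _) (pow_nonneg h0 _)
      _ = (Real.exp (1 - ‖q‖)⁻¹ * ‖q‖ ^ k) * ‖q‖ ^ j := by rw [pow_add]; ring
  have := tsum_of_norm_bounded (hgeo.mul_left (Real.exp (1 - ‖q‖)⁻¹ * ‖q‖ ^ k)) hb
  rw [pentR]
  refine this.trans ?_
  ring_nf
  exact le_refl _

lemma pent_expand {q : ℂ} (hq : ‖q‖ < 1) (K : ℕ) :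
    (∏' n : ℕ, (1 - q ^ (n + 1))) =
      (1 + ∑ k ∈ range K, (-1:ℂ) ^ (k+1) *
        (q ^ ((k+1) + pentE (k+1)) + q ^ (2*(k+1) + pentE (k+1))))
      + (-1) ^ (K+1) * pentR q (K+1) := by
  induction K with
  | zero => simpa [sub_eq_add_neg] using one_sub_tprod hq
  | succ K ih =>
    rw [ih, pentR_rec hq (by omega : 1 ≤ K + 1), Finset.sum_range_succ]
    ring

lemma pentE_growth (k : ℕ) (hk : 1 ≤ k) :
    2*k+3 ≤ (k+1) + pentE (k+1) ∧ 2*k+5 ≤ 2*(k+1) + pentE (k+1) := by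
  have h : pentE (k+1) = pentE k + 3*k := rfl
  omega

lemma tprod_norm_le {q : ℂ} (hq : ‖q‖ < 1) :
    ‖∏' n : ℕ, (1 - q ^ (n + 1))‖ ≤ 1 + 2*‖q‖ + 2*‖q‖^4 * (1 - ‖q‖^2)⁻¹ := by
  have h0 : (0:ℝ) ≤ ‖q‖ := norm_nonneg q
  have hr2 : ‖q‖^2 < 1 := by nlinarith
  have h20 : (0:ℝ) ≤ (1 - ‖q‖^2)⁻¹ := inv_nonneg.2 (by linarith)
  set B : ℝ := 1 + 2*‖q‖ + 2*‖q‖^4 * (1 - ‖q‖^2)⁻¹ with hB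
  set E : ℝ := Real.exp (1 - ‖q‖)⁻¹ * (1 - ‖q‖)⁻¹ with hE
  have hsum : ∀ K, ∑ k ∈ range K,
      (‖q‖ ^ ((k+1) + pentE (k+1)) + ‖q‖ ^ (2*(k+1) + pentE (k+1)))
        ≤ 2*‖q‖ + 2*‖q‖^4 * (1 - ‖q‖^2)⁻¹ := by
    intro K
    match K with
    | 0 => simp; positivity
    | K+1 =>
      rw [Finset.sum_range_succ']
      have hf0 : ‖q‖ ^ (0+1 + pentE (0+1)) + ‖q‖ ^ (2*(0+1) + pentE (0+1)) ≤ 2*‖q‖ := by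
        rw [show (0+1) + pentE (0+1) = 1 from rfl, show 2*(0+1) + pentE (0+1) = 2 from rfl]
        nlinarith
      have hfi : ∀ i, ‖q‖ ^ ((i+1+1) + pentE (i+1+1)) + ‖q‖ ^ (2*(i+1+1) + pentE (i+1+1))
          ≤ 2 * (‖q‖^5 * (‖q‖^2)^i) := by
        intro i
        obtain ⟨hg, hh⟩ := pentE_growth (i+1) (by omega)
        have e1 : ‖q‖ ^ ((i+1+1) + pentE (i+1+1)) ≤ ‖q‖ ^ (2*(i+1)+3) :=
          pow_le_pow_of_le_one h0 hq.le hg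
        have e2 : ‖q‖ ^ (2*(i+1+1) + pentE (i+1+1)) ≤ ‖q‖ ^ (2*(i+1)+5) :=
          pow_le_pow_of_le_one h0 hq.le hh
        have e3 : ‖q‖ ^ (2*(i+1)+5) ≤ ‖q‖ ^ (2*(i+1)+3) :=
          pow_le_pow_of_le_one h0 hq.le (by omega)
        have e4 : ‖q‖ ^ (2*(i+1)+3) = ‖q‖^5 * (‖q‖^2)^i := by
          rw [← pow_mul, ← pow_add]
          congr 1
          ring
        nlinarith
      calc (∑ i ∈ range K, (‖q‖ ^ ((i+1+1) + pentE (i+1+1)) + ‖q‖ ^ (2*(i+1+1) + pentE (i+1+1))))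
            + (‖q‖ ^ (0+1 + pentE (0+1)) + ‖q‖ ^ (2*(0+1) + pentE (0+1)))
          ≤ (∑ i ∈ range K, 2 * (‖q‖^5 * (‖q‖^2)^i)) + 2*‖q‖ :=
            add_le_add (Finset.sum_le_sum (fun i _ => hfi i)) hf0
        _ = 2*‖q‖^5 * (∑ i ∈ range K, (‖q‖^2)^i) + 2*‖q‖ := by
            rw [Finset.mul_sum]
            exact congrArg₂ (· + ·) (Finset.sum_congr rfl fun i _ => by ring) rfl
        _ ≤ 2*‖q‖^5 * (1 - ‖q‖^2)⁻¹ + 2*‖q‖ := by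
            have := Summable.sum_le_tsum (range K) (fun i _ => pow_nonneg (by positivity) i)
              (summable_geometric_of_lt_one (by positivity) hr2)
            rw [tsum_geometric_of_lt_one (by positivity) hr2] at this
            nlinarith [pow_nonneg h0 5]
        _ ≤ 2*‖q‖ + 2*‖q‖^4 * (1 - ‖q‖^2)⁻¹ := by
            have h54 : ‖q‖^5 ≤ ‖q‖^4 := pow_le_pow_of_le_one h0 hq.le (by omega)
            nlinarith
  have hKbound : ∀ K, ‖∏' n : ℕ, (1 - q ^ (n + 1))‖ ≤ B + E * ‖q‖ ^ (K+1) := by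
    intro K
    rw [pent_expand hq K]
    calc ‖_ + (-1:ℂ) ^ (K+1) * pentR q (K+1)‖
        ≤ ‖(1:ℂ) + ∑ k ∈ range K, (-1:ℂ) ^ (k+1) *
            (q ^ ((k+1) + pentE (k+1)) + q ^ (2*(k+1) + pentE (k+1)))‖
          + ‖(-1:ℂ) ^ (K+1) * pentR q (K+1)‖ := norm_add_le _ _
      _ ≤ B + E * ‖q‖ ^ (K+1) := by
          have hRn : ‖(-1:ℂ) ^ (K+1) * pentR q (K+1)‖ ≤ E * ‖q‖ ^ (K+1) := by
            rw [norm_mul, norm_pow, norm_neg, norm_one, one_pow, one_mul]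
            exact pentR_norm_le hq (by omega)
          have hSn : ‖(1:ℂ) + ∑ k ∈ range K, (-1:ℂ) ^ (k+1) *
              (q ^ ((k+1) + pentE (k+1)) + q ^ (2*(k+1) + pentE (k+1)))‖ ≤ B := by
            refine (norm_add_le _ _).trans ?_
            rw [norm_one, hB]
            have h1 : ‖∑ k ∈ range K, (-1:ℂ) ^ (k+1) *
                (q ^ ((k+1) + pentE (k+1)) + q ^ (2*(k+1) + pentE (k+1)))‖
                ≤ ∑ k ∈ range K,
                  (‖q‖ ^ ((k+1) + pentE (k+1)) + ‖q‖ ^ (2*(k+1) + pentE (k+1))) := by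
              refine (norm_sum_le _ _).trans (Finset.sum_le_sum (fun k _ => ?_))
              rw [norm_mul, norm_pow, norm_neg, norm_one, one_pow, one_mul]
              refine (norm_add_le _ _).trans ?_
              rw [norm_pow, norm_pow]
            linarith [hsum K]
          linarith
  have htend : Filter.Tendsto (fun K : ℕ => B + E * ‖q‖ ^ (K+1)) Filter.atTop (nhds B) := by
    have h1 : Filter.Tendsto (fun K : ℕ => ‖q‖ ^ (K+1)) Filter.atTop (nhds 0) :=
      (tendsto_pow_atTop_nhds_zero_of_lt_one h0 hq).comp (Filter.tendsto_add_atTop_nat 1)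
    have := (h1.const_mul E).const_add B
    simpa using this
  exact ge_of_tendsto' htend hKbound

end PentagonalAux

theorem delta_upper_bound (τ : ℂ) (hτ : 0 < τ.im) :
    ‖Δ τ‖ ≤ Real.exp (-(2 * π * τ.im)) *
      (1 + 2 * Real.exp (-(2 * π * τ.im)) +
        2 * Real.exp (-(8 * π * τ.im)) / (1 - Real.exp (-(4 * π * τ.im)))) ^ 24 := by
  set q : ℂ := Complex.exp (2 * π * I * τ) with hqdef
  have hre : (2 * (π:ℂ) * I * τ).re = -(2 * π * τ.im) := by
    simp [Complex.mul_re, Complex.mul_im]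
  have hnq : ‖q‖ = Real.exp (-(2 * π * τ.im)) := by
    rw [hqdef, Complex.norm_exp, hre]
  have hq1 : ‖q‖ < 1 := by
    rw [hnq, ← Real.exp_zero]
    apply Real.exp_lt_exp.2
    nlinarith [Real.pi_pos]
  have hm := multipliable_one_sub_pow hq1
  have hp : HasProd (fun n : ℕ => (1 - q ^ (n+1)) ^ 24) ((∏' n : ℕ, (1 - q ^ (n+1))) ^ 24) := by
    show Filter.Tendsto (fun s : Finset ℕ => ∏ i ∈ s, (1 - q ^ (i+1)) ^ 24) Filter.atTop
      (nhds ((∏' n : ℕ, (1 - q ^ (n+1))) ^ 24))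
    exact (hm.hasProd).pow 24
  have htp : (∏' n : ℕ, (1 - q ^ (n+1)) ^ 24) = (∏' n : ℕ, (1 - q ^ (n+1))) ^ 24 := hp.tprod_eq
  have he4 : Real.exp (-(8 * π * τ.im)) = ‖q‖ ^ 4 := by
    rw [hnq, ← Real.exp_nat_mul]
    congr 1
    push_cast
    ring
  have he2 : Real.exp (-(4 * π * τ.im)) = ‖q‖ ^ 2 := by
    rw [hnq, ← Real.exp_nat_mul]
    congr 1
    push_cast
    ring
  rw [Δ, ← hqdef, ← hnq, norm_mul, htp, norm_pow, he4, he2, div_eq_mul_inv]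
  refine mul_le_mul_of_nonneg_left ?_ (norm_nonneg q)
  exact pow_le_pow_left₀ (norm_nonneg _) (tprod_norm_le hq1) 24
end

section
/- For every τ in the upper half plane with e^{-2π Im(τ)} ≤ 1/3, the modular discriminant satisfies |Δ(τ)| ≥ e^{-2π Im(τ)} (1 - e^{-2π Im(τ)} - e^{-4π Im(τ)} - 2 e^{-4π Im(τ)}/(1 - e^{-2π Im(τ)}))^{24}. -/
open Complex Real

theorem hasProd_pow' {M : Type*} [CommMonoid M] [TopologicalSpace M] [ContinuousMul M]
    {f : ℕ → M} {a : M} (h : HasProd f a) (k : ℕ) :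
    HasProd (fun i ↦ f i ^ k) (a ^ k) := by
  induction k with
  | zero => simpa using hasProd_one
  | succ n ih => simpa [pow_succ] using ih.mul h

theorem one_sub_sum_le_prod' {ι : Type*} (s : Finset ι) (f : ι → ℝ) (h0 : ∀ i ∈ s, 0 ≤ f i)
    (h1 : ∀ i ∈ s, f i ≤ 1) : 1 - ∑ i ∈ s, f i ≤ ∏ i ∈ s, (1 - f i) := by
  classical
  induction s using Finset.induction_on with
  | empty => simp
  | insert _ _ hx ih =>
    rename_i a s
    rw [Finset.sum_insert hx, Finset.prod_insert hx]
    have h0a := h0 a (Finset.mem_insert_self a s)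
    have h1a := h1 a (Finset.mem_insert_self a s)
    have ih' := ih (fun i hi => h0 i (Finset.mem_insert_of_mem hi))
      (fun i hi => h1 i (Finset.mem_insert_of_mem hi))
    have hs0 : 0 ≤ ∑ i ∈ s, f i := Finset.sum_nonneg fun i hi => h0 i (Finset.mem_insert_of_mem hi)
    nlinarith [mul_le_mul_of_nonneg_left ih' (by linarith : (0:ℝ) ≤ 1 - f a)]

theorem delta_lower_bound (τ : ℂ) (hτ : 0 < τ.im)
    (hsmall : Real.exp (-(2 * π * τ.im)) ≤ 1 / 3) :
    Real.exp (-(2 * π * τ.im)) *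
      (1 - Real.exp (-(2 * π * τ.im)) - Real.exp (-(4 * π * τ.im)) -
        2 * Real.exp (-(4 * π * τ.im)) / (1 - Real.exp (-(2 * π * τ.im)))) ^ 24 ≤ ‖Δ τ‖ := by
  set r : ℝ := Real.exp (-(2 * π * τ.im)) with hr
  set q : ℂ := Complex.exp (2 * π * I * τ) with hqdef
  have hr0 : 0 < r := Real.exp_pos _
  have hr1 : r < 1 := lt_of_le_of_lt hsmall (by norm_num)
  have hq : ‖q‖ = r := by
    rw [hqdef, Complex.norm_exp]
    congr 1
    simp [Complex.mul_re, Complex.mul_im]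
  have hqn : ∀ n : ℕ, ‖q ^ (n + 1)‖ = r ^ (n + 1) := fun n => by
    rw [norm_pow, hq]
  have hrn : ∀ n : ℕ, r ^ (n + 1) ≤ r := fun n => by
    calc r ^ (n + 1) ≤ r ^ 1 := pow_le_pow_of_le_one hr0.le hr1.le (by omega)
    _ = r := pow_one r
  -- e^{-4π t} = r ^ 2
  have he4 : Real.exp (-(4 * π * τ.im)) = r ^ 2 := by
    rw [show -(4*π*τ.im) = (-(2*π*τ.im)) + (-(2*π*τ.im)) by ring, Real.exp_add, sq]
  rw [he4]
  set C : ℝ := 1 - r - r ^ 2 - 2 * r ^ 2 / (1 - r) with hC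
  have h1r : (0:ℝ) < 1 - r := by linarith
  have hdiv : 2 * r ^ 2 / (1 - r) ≤ 3 * r ^ 2 := by
    rw [div_le_iff₀ h1r]; nlinarith
  have hC0 : 0 ≤ C := by
    rw [hC]; nlinarith
  have hCle : C ≤ 1 - r / (1 - r) := by
    have h' : r / (1 - r) = r + r ^ 2 / (1 - r) := by field_simp; ring
    have h2 : 0 ≤ r ^ 2 / (1 - r) := by positivity
    rw [hC, h']
    have h3 : r ^ 2 / (1 - r) ≤ r ^ 2 + 2 * r ^ 2 / (1 - r) := by
      have h4 : 2 * r ^ 2 / (1 - r) = 2 * (r ^ 2 / (1 - r)) := by ring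
      have := sq_nonneg r
      linarith
    linarith
  clear_value r q C
  -- summability of logs
  have hgeom : Summable (fun n : ℕ ↦ (3/2 : ℝ) * r ^ (n + 1)) := by
    have := (summable_geometric_of_lt_one hr0.le hr1).mul_left ((3/2 : ℝ) * r)
    refine this.congr fun n => ?_
    ring
  have hlog : ∀ x : Unit, Summable fun n : ℕ ↦ Complex.log (1 - q ^ (n + 1)) := by
    intro _
    apply Summable.of_norm_bounded hgeom
    intro n
    have h12 : ‖-(q ^ (n + 1))‖ ≤ 1/2 := by
      rw [norm_neg, hqn]
      linarith [hrn n, hsmall]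
    have := Complex.norm_log_one_add_half_le_self h12
    rw [norm_neg, hqn] at this
    simpa [sub_eq_add_neg] using this
  have hne : ∀ (x : Unit) (n : ℕ), (1 : ℂ) - q ^ (n + 1) ≠ 0 := by
    intro _ n h
    have : ‖q ^ (n+1)‖ = 1 := by
      have : q ^ (n+1) = 1 := by linear_combination -h
      simp [this]
    rw [hqn] at this
    nlinarith [hrn n]
  have hmul : Multipliable fun n : ℕ ↦ (1 : ℂ) - q ^ (n + 1) :=
    Complex.multipliable_of_summable_log (hlog ())
  obtain ⟨a, ha⟩ := hmul
  have hpow : HasProd (fun n : ℕ ↦ ((1 : ℂ) - q ^ (n + 1)) ^ 24) (a ^ 24) := hasProd_pow' ha 24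
  have hΔ : Δ τ = q * a ^ 24 := by
    rw [Δ, ← hqdef, hpow.tprod_eq]
  have hCa : C ≤ ‖a‖ := by
    apply le_hasProd_of_le_prod ha.norm
    intro s
    have step1 : C ≤ 1 - ∑ n ∈ s, r ^ (n + 1) := by
      have hsum : Summable fun n : ℕ ↦ r ^ (n + 1) := by
        have := (summable_geometric_of_lt_one hr0.le hr1).mul_left r
        refine this.congr fun n => ?_; ring
      have htsum : ∑' n : ℕ, r ^ (n + 1) = r / (1 - r) := by
        have h1 : ∑' n : ℕ, r ^ (n + 1) = r * ∑' n : ℕ, r ^ n := by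
          rw [← tsum_mul_left]
          exact tsum_congr fun n => by ring
        rw [h1, tsum_geometric_of_lt_one hr0.le hr1]
        field_simp
      have hle : ∑ n ∈ s, r ^ (n + 1) ≤ r / (1 - r) := by
        rw [← htsum]
        exact Summable.sum_le_tsum s (fun n _ => by positivity) hsum
      linarith [hCle, hle]
    have step2 : 1 - ∑ n ∈ s, r ^ (n + 1) ≤ ∏ n ∈ s, (1 - r ^ (n + 1)) :=
      one_sub_sum_le_prod' s _ (fun n _ => by positivity)
        (fun n _ => by nlinarith [hrn n, pow_pos hr0 (n+1)])
    have step3 : ∏ n ∈ s, (1 - r ^ (n + 1)) ≤ ∏ n ∈ s, ‖(1:ℂ) - q ^ (n + 1)‖ := by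
      apply Finset.prod_le_prod
      · intro n _; nlinarith [hrn n]
      · intro n _
        have := norm_sub_norm_le (1 : ℂ) (q ^ (n + 1))
        rw [norm_one, hqn] at this
        exact this
    linarith
  rw [hΔ, norm_mul, norm_pow, hq]
  exact mul_le_mul_of_nonneg_left (pow_le_pow_left₀ hC0 hCa 24) hr0.le
end

section
/- For all θ ∈ [π/2, 2π/3] and all x ∈ [-1/2, 1/2], |Δ(e^{iθ}) / Δ(x + 0.65 i)| < 1/2 and |Δ(e^{iθ}) / Δ(x + 0.75 i)| < 7/10. -/
open Complex Real

-- geometric-type summability helper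
lemma sum_geom_shift {r : ℝ} (h0 : 0 ≤ r) (h1 : r < 1) :
    HasSum (fun n : ℕ => r ^ (n + 1)) (r * (1 - r)⁻¹) := by
  have := (hasSum_geometric_of_lt_one h0 h1).mul_left r
  simpa [pow_succ'] using this

lemma prod_norm_bounds (q : ℂ) (hq : ‖q‖ ≤ 1/5) :
    Real.exp (-(24 * ‖q‖ * (1 - ‖q‖)⁻¹ * (1 - ‖q‖)⁻¹)) ≤ ‖∏' n : ℕ, (1 - q ^ (n + 1)) ^ 24‖ ∧
    ‖∏' n : ℕ, (1 - q ^ (n + 1)) ^ 24‖ ≤ Real.exp (24 * ‖q‖ * (1 - ‖q‖)⁻¹) := by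
  set r : ℝ := ‖q‖ with hr
  have hr0 : 0 ≤ r := norm_nonneg q
  have hr1 : r < 1 := lt_of_le_of_lt hq (by norm_num)
  have hqn : ∀ n : ℕ, ‖q ^ (n + 1)‖ = r ^ (n + 1) := fun n => norm_pow q (n + 1)
  have hle : ∀ n : ℕ, r ^ (n + 1) ≤ r := fun n =>
    pow_le_of_le_one hr0 hr1.le (Nat.succ_ne_zero n)
  have hlt1 : ∀ n : ℕ, r ^ (n + 1) < 1 := fun n => lt_of_le_of_lt (hle n) hr1
  have hne : ∀ n : ℕ, (1 : ℂ) - q ^ (n + 1) ≠ 0 := by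
    intro n h
    have : q ^ (n + 1) = 1 := by linear_combination -h
    have h2 := hqn n
    rw [this] at h2
    simp at h2
    have := hlt1 n
    rw [← h2] at this
    exact absurd this (lt_irrefl 1)
  have hgs : Summable (fun n : ℕ => r ^ (n + 1)) := (sum_geom_shift hr0 hr1).summable
  -- multipliability of the complex product
  have m1 : Multipliable (fun n : ℕ => (1 : ℂ) - q ^ (n + 1)) := by
    exact ModularForm.multipliable_one_sub_pow hr1
  have m24 : Multipliable (fun n : ℕ => ((1 : ℂ) - q ^ (n + 1)) ^ 24) := by
    simpa [Function.comp_def] using m1.map (powMonoidHom 24 : ℂ →* ℂ) (continuous_pow 24)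
  -- the norm of the product
  have hnorm : ‖∏' n : ℕ, (1 - q ^ (n + 1)) ^ 24‖ = ∏' n : ℕ, ‖(1 : ℂ) - q ^ (n + 1)‖ ^ 24 := by
    rw [m24.norm_tprod]
    exact tprod_congr fun n => norm_pow _ 24
  set f : ℕ → ℝ := fun n => ‖(1 : ℂ) - q ^ (n + 1)‖ with hf
  have hfpos : ∀ n, 0 < f n := fun n => norm_pos_iff.mpr (hne n)
  have hfub : ∀ n, f n ≤ 1 + r ^ (n + 1) := by
    intro n
    calc f n ≤ ‖(1:ℂ)‖ + ‖q ^ (n + 1)‖ := norm_sub_le _ _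
    _ = 1 + r ^ (n + 1) := by rw [hqn n, norm_one]
  have hflb : ∀ n, 1 - r ^ (n + 1) ≤ f n := by
    intro n
    have := norm_sub_norm_le (1 : ℂ) (q ^ (n + 1))
    rwa [hqn n, norm_one] at this
  -- log bounds
  have hlub : ∀ n, Real.log (f n) ≤ r ^ (n + 1) := by
    intro n
    have := Real.log_le_sub_one_of_pos (hfpos n)
    linarith [hfub n]
  have hllb : ∀ n, -((1 - r)⁻¹ * r ^ (n + 1)) ≤ Real.log (f n) := by
    intro n
    set t := r ^ (n + 1)
    have ht0 : 0 ≤ t := pow_nonneg hr0 _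
    have ht1 : t < 1 := hlt1 n
    have h1t : (0:ℝ) < 1 - t := by linarith
    have h1r : (0:ℝ) < 1 - r := by linarith
    have hlog1 : Real.log (1 - t) ≤ Real.log (f n) :=
      Real.log_le_log h1t (hflb n)
    have h2 : Real.log ((1 - t)⁻¹) ≤ (1 - t)⁻¹ - 1 :=
      Real.log_le_sub_one_of_pos (inv_pos.mpr h1t)
    rw [Real.log_inv] at h2
    have h3 : (1 - t)⁻¹ - 1 = t / (1 - t) := by field_simp; ring
    have h4 : t / (1 - t) ≤ (1 - r)⁻¹ * t := by
      rw [div_le_iff₀ h1t]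
      rw [mul_comm (1-r)⁻¹ t, mul_assoc]
      nlinarith [inv_pos.mpr h1r, mul_le_mul_of_nonneg_left (hle n) (inv_pos.mpr h1r).le,
        (inv_mul_cancel₀ (ne_of_gt h1r))]
    nlinarith [hlog1]
  -- summability of logs
  have habs : ∀ n, |Real.log (f n ^ 24)| ≤ 24 * (1 - r)⁻¹ * r ^ (n + 1) := by
    intro n
    rw [Real.log_pow]
    rw [abs_mul, Nat.abs_cast]
    have h1r : (0:ℝ) < 1 - r := by linarith
    have hinv1 : (1:ℝ) ≤ (1 - r)⁻¹ := by
      rw [le_inv_comm₀ one_pos h1r]; linarith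
    have : |Real.log (f n)| ≤ (1 - r)⁻¹ * r ^ (n + 1) := by
      rw [abs_le]
      constructor
      · linarith [hllb n]
      · calc Real.log (f n) ≤ r ^ (n + 1) := hlub n
          _ ≤ (1 - r)⁻¹ * r ^ (n + 1) := by
              nlinarith [pow_nonneg hr0 (n + 1)]
    calc (24:ℝ) * |Real.log (f n)| ≤ 24 * ((1 - r)⁻¹ * r ^ (n + 1)) := by linarith
      _ = 24 * (1 - r)⁻¹ * r ^ (n + 1) := by ring
  have hsumlog : Summable (fun n => Real.log (f n ^ 24)) := by
    apply Summable.of_norm_bounded (g := fun n => 24 * (1 - r)⁻¹ * r ^ (n + 1))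
      (by simpa [mul_assoc] using hgs.mul_left (24 * (1 - r)⁻¹))
    intro n
    rw [Real.norm_eq_abs]; exact habs n
  -- product = exp of sum of logs
  have hprodexp : Real.exp (∑' n : ℕ, Real.log (f n ^ 24)) = ∏' n : ℕ, f n ^ 24 :=
    Real.rexp_tsum_eq_tprod (f := fun n => f n ^ 24)
      (fun n => pow_pos (hfpos n) 24) hsumlog
  -- bounds on the sum S
  set S := ∑' n : ℕ, Real.log (f n ^ 24) with hS
  have hSub : S ≤ 24 * r * (1 - r)⁻¹ := by
    have h1 : S ≤ ∑' n : ℕ, 24 * r ^ (n + 1) := by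
      apply Summable.tsum_le_tsum _ hsumlog (hgs.mul_left 24)
      intro n
      rw [Real.log_pow]
      push_cast
      nlinarith [hlub n]
    have h2 : ∑' n : ℕ, 24 * r ^ (n + 1) = 24 * (r * (1 - r)⁻¹) :=
      ((sum_geom_shift hr0 hr1).mul_left 24).tsum_eq
    rw [h2] at h1
    linarith
  have hSlb : -(24 * r * (1 - r)⁻¹ * (1 - r)⁻¹) ≤ S := by
    have h1 : ∑' n : ℕ, -(24 * (1 - r)⁻¹ * r ^ (n + 1)) ≤ S := by
      apply Summable.tsum_le_tsum _ ((hgs.mul_left (24 * (1 - r)⁻¹)).neg) hsumlog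
      intro n
      rw [Real.log_pow]
      push_cast
      nlinarith [hllb n]
    have h2 : ∑' n : ℕ, -(24 * (1 - r)⁻¹ * r ^ (n + 1))
        = -(24 * (1 - r)⁻¹ * (r * (1 - r)⁻¹)) :=
      (((sum_geom_shift hr0 hr1).mul_left (24 * (1 - r)⁻¹)).neg).tsum_eq
    rw [h2] at h1
    calc -(24 * r * (1 - r)⁻¹ * (1 - r)⁻¹) = -(24 * (1 - r)⁻¹ * (r * (1 - r)⁻¹)) := by ring
      _ ≤ S := h1
  -- ‖∏'‖ = ∏' f n ^ 24
  have key : ‖∏' n : ℕ, (1 - q ^ (n + 1)) ^ 24‖ = Real.exp S := by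
    rw [hnorm, ← hprodexp]
  rw [key]
  constructor
  · rw [Real.exp_le_exp]; linarith
  · rw [Real.exp_le_exp]; linarith

lemma norm_q_exp (τ : ℂ) : ‖Complex.exp (2 * π * I * τ)‖ = Real.exp (-(2 * π * τ.im)) := by
  rw [Complex.norm_exp]
  congr 1
  have : (2 * (π:ℂ) * I * τ) = ((2*π : ℝ) : ℂ) * (I * τ) := by push_cast; ring
  rw [this]
  simp [Complex.mul_re, Complex.I_re, Complex.I_im, Complex.ofReal_re, Complex.ofReal_im]

lemma norm_Δ_bounds (τ : ℂ) (hq : ‖Complex.exp (2 * π * I * τ)‖ ≤ 1/5) :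
    ‖Complex.exp (2 * π * I * τ)‖ *
      Real.exp (-(24 * ‖Complex.exp (2 * π * I * τ)‖ * (1 - ‖Complex.exp (2 * π * I * τ)‖)⁻¹
        * (1 - ‖Complex.exp (2 * π * I * τ)‖)⁻¹)) ≤ ‖Δ τ‖ ∧
    ‖Δ τ‖ ≤ ‖Complex.exp (2 * π * I * τ)‖ *
      Real.exp (24 * ‖Complex.exp (2 * π * I * τ)‖ * (1 - ‖Complex.exp (2 * π * I * τ)‖)⁻¹) := by
  set q := Complex.exp (2 * π * I * τ) with hqdef
  have hb := prod_norm_bounds q hq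
  have hΔ : ‖Δ τ‖ = ‖q‖ * ‖∏' n : ℕ, (1 - q ^ (n + 1)) ^ 24‖ := by
    rw [Δ, norm_mul]
  rw [hΔ]
  have h0 : (0:ℝ) ≤ ‖q‖ := norm_nonneg q
  constructor
  · exact mul_le_mul_of_nonneg_left hb.1 h0
  · exact mul_le_mul_of_nonneg_left hb.2 h0

lemma exp_ge_pow4 (x : ℝ) (hx : 0 ≤ x) : (1 + x/4)^4 ≤ Real.exp x := by
  have h1 : 1 + x/4 ≤ Real.exp (x/4) := by
    have := Real.add_one_le_exp (x/4); linarith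
  calc (1 + x/4)^4 ≤ (Real.exp (x/4))^4 := by
        apply pow_le_pow_left₀ (by linarith) h1
    _ = Real.exp x := by
        rw [← Real.exp_nat_mul]; push_cast; ring_nf

lemma exp_ge_pow8 (x : ℝ) (hx : 0 ≤ x) : (1 + x/8)^8 ≤ Real.exp x := by
  have h1 : 1 + x/8 ≤ Real.exp (x/8) := by
    have := Real.add_one_le_exp (x/8); linarith
  calc (1 + x/8)^8 ≤ (Real.exp (x/8))^8 := by
        apply pow_le_pow_left₀ (by linarith) h1
    _ = Real.exp x := by
        rw [← Real.exp_nat_mul]; push_cast; ring_nf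

lemma exp_five : (148.413 : ℝ) ≤ Real.exp 5 := by
  have h := Real.exp_one_gt_d9.le
  calc (148.413:ℝ) ≤ 2.7182818283^5 := by norm_num
    _ ≤ (Real.exp 1)^5 := by
        apply pow_le_pow_left₀ (by norm_num) h
    _ = Real.exp 5 := by rw [← Real.exp_nat_mul]; push_cast; ring_nf

lemma exp_four : (54.598 : ℝ) ≤ Real.exp 4 := by
  have h := Real.exp_one_gt_d9.le
  calc (54.598:ℝ) ≤ 2.7182818283^4 := by norm_num
    _ ≤ (Real.exp 1)^4 := by
        apply pow_le_pow_left₀ (by norm_num) h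
    _ = Real.exp 4 := by rw [← Real.exp_nat_mul]; push_cast; ring_nf

lemma sqrt3_ge : (1.7320508 : ℝ) ≤ Real.sqrt 3 := by
  have h : Real.sqrt 3 ^ 2 = 3 := Real.sq_sqrt (by norm_num)
  nlinarith [Real.sqrt_nonneg 3]

lemma ra_bound : Real.exp (-(Real.sqrt 3 * π)) ≤ 0.004433 := by
  have h1 : (5.4413969 : ℝ) ≤ Real.sqrt 3 * π := by
    nlinarith [sqrt3_ge, Real.pi_gt_d6.le, Real.pi_pos, Real.sqrt_nonneg 3]
  have h2 : (225.581 : ℝ) ≤ Real.exp 5.4413969 := by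
    have he : Real.exp (5.4413969 : ℝ) = Real.exp 5 * Real.exp 0.4413969 := by
      rw [← Real.exp_add]; norm_num
    rw [he]
    have hb : ((1 : ℝ) + 0.4413969/4)^4 ≤ Real.exp 0.4413969 := exp_ge_pow4 _ (by norm_num)
    nlinarith [exp_five, Real.exp_pos (0.4413969 : ℝ), Real.exp_pos (5 : ℝ)]
  have h3 : Real.exp (-(Real.sqrt 3 * π)) ≤ Real.exp (-(5.4413969 : ℝ)) := by
    rw [Real.exp_le_exp]; linarith
  refine h3.trans ?_
  rw [Real.exp_neg]
  have h4 : (0.004433 : ℝ)⁻¹ ≤ Real.exp 5.4413969 := le_trans (by norm_num) h2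
  calc (Real.exp (5.4413969:ℝ))⁻¹ ≤ ((0.004433 : ℝ)⁻¹)⁻¹ := by
        apply inv_anti₀ (by norm_num) h4
    _ = 0.004433 := inv_inv _

lemma rb_bound : Real.exp (-(2 * π * 0.65)) ≤ 0.016896 := by
  have h1 : (4.0840696 : ℝ) ≤ 2 * π * 0.65 := by
    nlinarith [Real.pi_gt_d6.le]
  have h2 : (59.1866 : ℝ) ≤ Real.exp 4.0840696 := by
    have he : Real.exp (4.0840696 : ℝ) = Real.exp 4 * Real.exp 0.0840696 := by
      rw [← Real.exp_add]; norm_num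
    rw [he]
    have hb : ((1 : ℝ) + 0.0840696) ≤ Real.exp 0.0840696 := by
      have := Real.add_one_le_exp (0.0840696 : ℝ); linarith
    nlinarith [exp_four, Real.exp_pos (0.0840696 : ℝ), Real.exp_pos (4 : ℝ)]
  have h3 : Real.exp (-(2 * π * 0.65)) ≤ Real.exp (-(4.0840696 : ℝ)) := by
    rw [Real.exp_le_exp]; linarith
  refine h3.trans ?_
  rw [Real.exp_neg]
  have h4 : (0.016896 : ℝ)⁻¹ ≤ Real.exp 4.0840696 := le_trans (by norm_num) h2
  calc (Real.exp (4.0840696:ℝ))⁻¹ ≤ ((0.016896 : ℝ)⁻¹)⁻¹ := by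
        apply inv_anti₀ (by norm_num) h4
    _ = 0.016896 := inv_inv _

lemma rc_bound : Real.exp (-(2 * π * 0.75)) ≤ 0.0092565 := by
  have h1 : (4.712388 : ℝ) ≤ 2 * π * 0.75 := by
    nlinarith [Real.pi_gt_d6.le]
  have h2 : (108.0325 : ℝ) ≤ Real.exp 4.712388 := by
    have he : Real.exp (4.712388 : ℝ) = Real.exp 4 * Real.exp 0.712388 := by
      rw [← Real.exp_add]; norm_num
    rw [he]
    have hb : ((1 : ℝ) + 0.712388/8)^8 ≤ Real.exp 0.712388 := exp_ge_pow8 _ (by norm_num)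
    nlinarith [exp_four, Real.exp_pos (0.712388 : ℝ), Real.exp_pos (4 : ℝ)]
  have h3 : Real.exp (-(2 * π * 0.75)) ≤ Real.exp (-(4.712388 : ℝ)) := by
    rw [Real.exp_le_exp]; linarith
  refine h3.trans ?_
  rw [Real.exp_neg]
  have h4 : (0.0092565 : ℝ)⁻¹ ≤ Real.exp 4.712388 := le_trans (by norm_num) h2
  calc (Real.exp (4.712388:ℝ))⁻¹ ≤ ((0.0092565 : ℝ)⁻¹)⁻¹ := by
        apply inv_anti₀ (by norm_num) h4
    _ = 0.0092565 := inv_inv _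

set_option maxHeartbeats 1000000 in
theorem delta_ratio_bounds (θ : ℝ) (hθ : θ ∈ Set.Icc (π / 2) (2 * π / 3))
    (x : ℝ) (hx : x ∈ Set.Icc (-(1/2) : ℝ) (1/2)) :
    ‖Δ (Complex.exp (I * θ)) / Δ ((x : ℂ) + 0.65 * I)‖ < 1 / 2 ∧
    ‖Δ (Complex.exp (I * θ)) / Δ ((x : ℂ) + 0.75 * I)‖ < 7 / 10 := by
  obtain ⟨hθ1, hθ2⟩ := hθ
  -- sin θ ≥ √3 / 2
  have hsin : Real.sqrt 3 / 2 ≤ Real.sin θ := by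
    have hc : Real.cos (π/6) ≤ Real.cos (θ - π/2) := by
      apply Real.cos_le_cos_of_nonneg_of_le_pi (by linarith) (by linarith [Real.pi_pos])
      linarith
    rw [Real.cos_pi_div_six, Real.cos_sub_pi_div_two] at hc
    exact hc
  -- the numerator point
  set τa : ℂ := Complex.exp (I * θ) with hτa
  have hima : τa.im = Real.sin θ := by
    rw [hτa, mul_comm]
    exact Complex.exp_ofReal_mul_I_im θ
  have hra : ‖Complex.exp (2 * π * I * τa)‖ = Real.exp (-(2 * π * Real.sin θ)) := by
    rw [norm_q_exp, hima]
  have hra2 : ‖Complex.exp (2 * π * I * τa)‖ ≤ Real.exp (-(Real.sqrt 3 * π)) := by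
    rw [hra, Real.exp_le_exp]
    nlinarith [Real.pi_pos]
  have hra3 : ‖Complex.exp (2 * π * I * τa)‖ ≤ 0.004433 := hra2.trans ra_bound
  have hq5a : ‖Complex.exp (2 * π * I * τa)‖ ≤ 1/5 := by linarith
  have hra0 : (0:ℝ) ≤ ‖Complex.exp (2 * π * I * τa)‖ := norm_nonneg _
  -- numerator upper bound
  have hAfac : 24 * ‖Complex.exp (2 * π * I * τa)‖ * (1 - ‖Complex.exp (2 * π * I * τa)‖)⁻¹
      ≤ 0.10687 := by
    set s := ‖Complex.exp (2 * π * I * τa)‖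
    rw [mul_assoc, ← div_eq_mul_inv, ← mul_div_assoc, div_le_iff₀ (by linarith : (0:ℝ) < 1 - s)]
    nlinarith
  have hnum : ‖Δ τa‖ ≤ Real.exp (-(Real.sqrt 3 * π) + 0.10687) := by
    refine le_trans (norm_Δ_bounds τa hq5a).2 ?_
    rw [Real.exp_add]
    exact mul_le_mul hra2 (Real.exp_le_exp.mpr hAfac) (Real.exp_pos _).le (Real.exp_pos _).le
  -- a generic denominator bound
  have hden : ∀ (c : ℝ) (τ : ℂ), c < 1 → ‖Complex.exp (2 * π * I * τ)‖ ≤ c →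
      24 * ‖Complex.exp (2 * π * I * τ)‖ * (1 - ‖Complex.exp (2 * π * I * τ)‖)⁻¹
        * (1 - ‖Complex.exp (2 * π * I * τ)‖)⁻¹ ≤
        24 * c * (1 - c)⁻¹ * (1 - c)⁻¹ := by
    intro c τ hc1 hub
    set s := ‖Complex.exp (2 * π * I * τ)‖ with hs
    have h0 : (0:ℝ) ≤ s := norm_nonneg _
    have h1c : (0:ℝ) < 1 - c := by linarith
    have h1s : (0:ℝ) < 1 - s := by linarith
    have hu : (1 - s)⁻¹ ≤ (1 - c)⁻¹ := by
      apply inv_anti₀ h1c (by linarith)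
    have hu0 : (0:ℝ) ≤ (1 - s)⁻¹ := (inv_pos.mpr h1s).le
    have hv0 : (0:ℝ) ≤ (1 - c)⁻¹ := (inv_pos.mpr h1c).le
    have step1 : 24 * s * (1 - s)⁻¹ ≤ 24 * c * (1 - c)⁻¹ :=
      mul_le_mul (by linarith) hu hu0 (by linarith)
    exact mul_le_mul step1 hu hu0 (mul_nonneg (by linarith) hv0)
  constructor
  · -- first bound
    set τb : ℂ := (x : ℂ) + 0.65 * I with hτb
    have himb : τb.im = 0.65 := by rw [hτb]; simp
    have hrb : ‖Complex.exp (2 * π * I * τb)‖ = Real.exp (-(2 * π * 0.65)) := by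
      rw [norm_q_exp, himb]
    have hrbU : ‖Complex.exp (2 * π * I * τb)‖ ≤ 0.016896 := hrb ▸ rb_bound
    have hq5b : ‖Complex.exp (2 * π * I * τb)‖ ≤ 1/5 := by linarith
    have hrb0 : (0:ℝ) ≤ ‖Complex.exp (2 * π * I * τb)‖ := norm_nonneg _
    have hBfac : 24 * ‖Complex.exp (2 * π * I * τb)‖ * (1 - ‖Complex.exp (2 * π * I * τb)‖)⁻¹
        * (1 - ‖Complex.exp (2 * π * I * τb)‖)⁻¹ ≤ 0.41957 := by
      refine le_trans (hden 0.016896 τb (by norm_num) hrbU) ?_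
      norm_num
    have hdenb : Real.exp (-(2 * π * 0.65) + -0.41957) ≤ ‖Δ τb‖ := by
      refine le_trans ?_ (norm_Δ_bounds τb hq5b).1
      rw [Real.exp_add, ← hrb]
      refine mul_le_mul_of_nonneg_left ?_ hrb0
      rw [Real.exp_le_exp]
      linarith
    rw [norm_div]
    have hb0 : (0:ℝ) < Real.exp (-(2 * π * 0.65) + -0.41957) := Real.exp_pos _
    calc ‖Δ τa‖ / ‖Δ τb‖
        ≤ Real.exp (-(Real.sqrt 3 * π) + 0.10687) / Real.exp (-(2 * π * 0.65) + -0.41957) := by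
          apply div_le_div₀ (Real.exp_pos _).le hnum hb0 hdenb
      _ = Real.exp ((-(Real.sqrt 3 * π) + 0.10687) - (-(2 * π * 0.65) + -0.41957)) :=
          (Real.exp_sub _ _).symm
      _ ≤ Real.exp (-0.83) := by
          rw [Real.exp_le_exp]
          have hsp : (0.4320508:ℝ) * 3.141592 ≤ (Real.sqrt 3 - 1.3) * π :=
            mul_le_mul (by linarith [sqrt3_ge]) Real.pi_gt_d6.le (by norm_num)
              (by linarith [sqrt3_ge])
          nlinarith [hsp]
      _ < 1/2 := by
          rw [Real.exp_neg]
          have h2 : (2:ℝ) < Real.exp 0.83 := by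
            have := exp_ge_pow4 (0.83 : ℝ) (by norm_num)
            nlinarith
          rw [inv_lt_comm₀ (Real.exp_pos _) (by norm_num)]
          norm_num
          linarith
  · -- second bound
    set τc : ℂ := (x : ℂ) + 0.75 * I with hτc
    have himc : τc.im = 0.75 := by rw [hτc]; simp
    have hrc : ‖Complex.exp (2 * π * I * τc)‖ = Real.exp (-(2 * π * 0.75)) := by
      rw [norm_q_exp, himc]
    have hrcU : ‖Complex.exp (2 * π * I * τc)‖ ≤ 0.0092565 := hrc ▸ rc_bound
    have hq5c : ‖Complex.exp (2 * π * I * τc)‖ ≤ 1/5 := by linarith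
    have hrc0 : (0:ℝ) ≤ ‖Complex.exp (2 * π * I * τc)‖ := norm_nonneg _
    have hCfac : 24 * ‖Complex.exp (2 * π * I * τc)‖ * (1 - ‖Complex.exp (2 * π * I * τc)‖)⁻¹
        * (1 - ‖Complex.exp (2 * π * I * τc)‖)⁻¹ ≤ 0.22633 := by
      refine le_trans (hden 0.0092565 τc (by norm_num) hrcU) ?_
      norm_num
    have hdenc : Real.exp (-(2 * π * 0.75) + -0.22633) ≤ ‖Δ τc‖ := by
      refine le_trans ?_ (norm_Δ_bounds τc hq5c).1
      rw [Real.exp_add, ← hrc]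
      refine mul_le_mul_of_nonneg_left ?_ hrc0
      rw [Real.exp_le_exp]
      linarith
    rw [norm_div]
    have hc0 : (0:ℝ) < Real.exp (-(2 * π * 0.75) + -0.22633) := Real.exp_pos _
    calc ‖Δ τa‖ / ‖Δ τc‖
        ≤ Real.exp (-(Real.sqrt 3 * π) + 0.10687) / Real.exp (-(2 * π * 0.75) + -0.22633) := by
          apply div_le_div₀ (Real.exp_pos _).le hnum hc0 hdenc
      _ = Real.exp ((-(Real.sqrt 3 * π) + 0.10687) - (-(2 * π * 0.75) + -0.22633)) :=
          (Real.exp_sub _ _).symm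
      _ ≤ Real.exp (-0.3958) := by
          rw [Real.exp_le_exp]
          have hsp : (0.2320508:ℝ) * 3.141592 ≤ (Real.sqrt 3 - 1.5) * π :=
            mul_le_mul (by linarith [sqrt3_ge]) Real.pi_gt_d6.le (by norm_num)
              (by linarith [sqrt3_ge])
          nlinarith [hsp]
      _ < 7/10 := by
          rw [Real.exp_neg]
          have h2 : (10:ℝ)/7 < Real.exp 0.3958 := by
            have := exp_ge_pow4 (0.3958 : ℝ) (by norm_num)
            nlinarith
          rw [inv_lt_comm₀ (Real.exp_pos _) (by norm_num)]
          linarith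
end

section
/- Let z = e^{iθ} with θ ∈ [π/2, 2π/3], and let γ = (a b; c d) ∈ PSL₂(ℤ) with |cd| ≥ 2. Then Im(γ.z) ≤ 2/5, where γ.z = (az+b)/(cz+d). -/
open Complex Real

lemma int_sq_five (c d : ℤ) (hcd : 2 ≤ |c * d|) : (5:ℤ) ≤ c^2 + d^2 := by
  have h2 : 2 ≤ |c| * |d| := by rwa [← abs_mul]
  have hc : 1 ≤ |c| := by nlinarith [abs_nonneg c, abs_nonneg d]
  have hd : 1 ≤ |d| := by nlinarith [abs_nonneg c, abs_nonneg d]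
  have h : 2 ≤ |c| ∨ 2 ≤ |d| := by
    by_contra h; push_neg at h; nlinarith
  have hc2 : c^2 = |c|^2 := (_root_.sq_abs c).symm
  have hd2 : d^2 = |d|^2 := (_root_.sq_abs d).symm
  rcases h with h | h <;> nlinarith

/-- If `γ = (a b; c d) ∈ PSL₂(ℤ)` with `|cd| ≥ 2` and `z = e^{iθ}` with
`θ ∈ [π/2, 2π/3]`, then `Im(γ.z) ≤ 2/5`. -/
theorem im_smul_le (a b c d : ℤ) (hdet : a * d - b * c = 1) (hcd : 2 ≤ |c * d|)
    (θ : ℝ) (hθ : θ ∈ Set.Icc (π / 2) (2 * π / 3)) :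
    (((a : ℂ) * Complex.exp (I * θ) + b) / ((c : ℂ) * Complex.exp (I * θ) + d)).im ≤ 2 / 5 := by
  obtain ⟨h1, h2⟩ := hθ
  have hπ := Real.pi_pos
  have hsin0 : 0 ≤ Real.sin θ := Real.sin_nonneg_of_nonneg_of_le_pi (by linarith) (by linarith)
  have hsin1 : Real.sin θ ≤ 1 := Real.sin_le_one θ
  have hcos0 : Real.cos θ ≤ 0 := Real.cos_nonpos_of_pi_div_two_le_of_le h1 (by linarith)
  have hc23 : Real.cos (2 * π / 3) = -(1/2) := by
    rw [show 2 * π / 3 = π - π/3 by ring, Real.cos_pi_sub, Real.cos_pi_div_three]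
  have hcos2 : -(1/2) ≤ Real.cos θ := by
    rw [← hc23]
    exact Real.cos_le_cos_of_nonneg_of_le_pi (by linarith) (by linarith) h2
  have h5 : (5:ℝ) ≤ (c:ℝ)^2 + (d:ℝ)^2 := by exact_mod_cast int_sq_five c d hcd
  have hdetR : (a:ℝ) * d - b * c = 1 := by exact_mod_cast hdet
  have hz : Complex.exp (I * θ) = (Real.cos θ : ℂ) + (Real.sin θ : ℂ) * I := by
    rw [mul_comm, Complex.exp_mul_I, Complex.ofReal_cos, Complex.ofReal_sin]
  rw [hz, Complex.div_im]
  simp only [Complex.add_re, Complex.add_im, Complex.mul_re, Complex.mul_im,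
    Complex.ofReal_re, Complex.ofReal_im, Complex.I_re, Complex.I_im,
    Complex.intCast_re, Complex.intCast_im, Complex.normSq_apply]
  ring_nf
  set S := Real.sin θ
  set T := Real.cos θ
  set C := (c:ℝ)
  set D := (d:ℝ)
  have hN : (5:ℝ)/2 ≤ (C * T + D)^2 + (C * S)^2 := by
    have hst : S^2 + T^2 = 1 := by
      rw [show S^2 + T^2 = Real.sin θ ^2 + Real.cos θ^2 from rfl]
      exact Real.sin_sq_add_cos_sq θ
    nlinarith [mul_nonneg (by linarith : (0:ℝ) ≤ T + 1/2) (sq_nonneg (C + D)),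
      mul_nonneg (by linarith : (0:ℝ) ≤ -T) (sq_nonneg (C - D)), sq_nonneg (C - D)]
  have hNpos : (0:ℝ) < (C * T + D) ^ 2 + (C * S) ^ 2 := by linarith
  have hNe : S ^ 2 * C ^ 2 + T * C * D * 2 + T ^ 2 * C ^ 2 + D ^ 2
      = (C * T + D) ^ 2 + (C * S) ^ 2 := by ring
  rw [hNe]
  have key : (a:ℝ) * S * D * ((C * T + D) ^ 2 + (C * S) ^ 2)⁻¹ -
      S * C * ((C * T + D) ^ 2 + (C * S) ^ 2)⁻¹ * (b:ℝ)
      = S / ((C * T + D) ^ 2 + (C * S) ^ 2) := by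
    rw [div_eq_mul_inv]
    linear_combination S * ((C * T + D) ^ 2 + (C * S) ^ 2)⁻¹ * hdetR
  rw [key, div_le_iff₀ hNpos]
  nlinarith
end

section
/- Let z = e^{iθ} with θ ∈ [π/2, 2π/3]. If τ in the upper half plane is PSL₂(ℤ)-equivalent to z, lies in the strip |Re(τ)| ≤ 1/2, has Im(τ) > 2/5, and τ ∉ {z, -1/z, -1/(z+1), z/(z+1), -1/(z-1), -z/(z-1)}, then τ does not exist; i.e., the only points of the orbit of z in the region {|Re τ| ≤ 1/2, Im τ > 2/5} are among those six points. -/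
open Complex Real

set_option maxHeartbeats 1000000

private lemma aux_hbd (C S : ℝ) (hCS : C^2 + S^2 = 1) (hC : C = -(1/2)) :
    ((C:ℂ) + S*I)^2 + ((C:ℂ) + S*I) + 1 = 0 := by
  have hS2 : S^2 = 3/4 := by rw [hC] at hCS; nlinarith
  rw [hC]
  rw [Complex.ext_iff]
  constructor <;>
    simp [Complex.add_re, Complex.add_im, pow_two, Complex.mul_re, Complex.mul_im] <;>
    nlinarith

/-- The only points of the `PSL₂(ℤ)`-orbit of `z = e^{iθ}`, `θ ∈ [π/2, 2π/3]`, in the region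
`{|Re τ| ≤ 1/2, Im τ > 2/5}` are among `z, -1/z, -1/(z+1), z/(z+1), -1/(z-1), -z/(z-1)`. -/
theorem orbit_points_in_region (θ : ℝ) (hθ : θ ∈ Set.Icc (π / 2) (2 * π / 3))
    (a b c d : ℤ) (hdet : a * d - b * c = 1) (τ : ℂ)
    (hτ : τ = ((a : ℂ) * Complex.exp (I * θ) + b) / ((c : ℂ) * Complex.exp (I * θ) + d))
    (hre : |τ.re| ≤ 1 / 2) (him : 2 / 5 < τ.im) :
    τ = Complex.exp (I * θ) ∨
    τ = -1 / Complex.exp (I * θ) ∨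
    τ = -1 / (Complex.exp (I * θ) + 1) ∨
    τ = Complex.exp (I * θ) / (Complex.exp (I * θ) + 1) ∨
    τ = -1 / (Complex.exp (I * θ) - 1) ∨
    τ = -Complex.exp (I * θ) / (Complex.exp (I * θ) - 1) := by
  obtain ⟨hθ1, hθ2⟩ := hθ
  have hπ := Real.pi_pos
  set C := Real.cos θ with hCdef
  set S := Real.sin θ with hSdef
  have hz : Complex.exp (I * θ) = (C : ℂ) + S * I := by
    rw [mul_comm, Complex.exp_mul_I, ← Complex.ofReal_cos, ← Complex.ofReal_sin]
  have hC0 : C ≤ 0 := by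
    rw [hCdef, ← Real.cos_pi_div_two]
    exact Real.cos_le_cos_of_nonneg_of_le_pi (by positivity) (by linarith) hθ1
  have hC1 : -(1/2) ≤ C := by
    have h23 : Real.cos (2*π/3) = -(1/2) := by
      rw [show 2*π/3 = π - π/3 by ring, Real.cos_pi_sub, Real.cos_pi_div_three]
    rw [hCdef, ← h23]
    exact Real.cos_le_cos_of_nonneg_of_le_pi (by linarith) (by linarith) hθ2
  have hS0 : 0 < S := Real.sin_pos_of_pos_of_lt_pi (by linarith) (by linarith)
  have hS1 : S ≤ 1 := Real.sin_le_one θ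
  have hCS : C^2 + S^2 = 1 := by
    rw [hCdef, hSdef]; nlinarith [Real.sin_sq_add_cos_sq θ]
  rw [hz] at hτ ⊢
  set z : ℂ := (C:ℂ) + S*I with hzdef
  have hzre : z.re = C := by simp [hzdef]
  have hzim : z.im = S := by simp [hzdef]
  have hz0 : z ≠ 0 := fun h => hS0.ne' (by rw [← hzim, h, Complex.zero_im])
  have hz1 : z + 1 ≠ 0 := fun h => hS0.ne' (by
    have h2 : (z+1).im = S := by simp [hzdef]
    rw [← h2, h, Complex.zero_im])
  have hzm1 : z - 1 ≠ 0 := fun h => hS0.ne' (by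
    have h2 : (z-1).im = S := by simp [hzdef]
    rw [← h2, h, Complex.zero_im])
  have hw1 : ((1:ℂ)/z).re = C := by
    rw [Complex.div_re]
    have h3 : Complex.normSq z = 1 := by
      simp [hzdef, Complex.normSq_apply]; linear_combination hCS
    rw [hzre, hzim, h3]
    simp
  have hw2 : ((1:ℂ)/(z+1)).re = 1/2 := by
    rw [Complex.div_re]
    have h1 : (z+1).re = C+1 := by simp [hzdef]
    have h2 : (z+1).im = S := by simp [hzdef]
    have h3 : Complex.normSq (z+1) = 2*(C+1) := by
      simp [hzdef, Complex.normSq_apply]; linear_combination hCS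
    rw [h1, h2, h3]
    simp
    rw [div_eq_iff (by nlinarith : 2*(C+1) ≠ 0)]
    ring
  have hw3 : ((1:ℂ)/(z-1)).re = -(1/2) := by
    rw [Complex.div_re]
    have h1 : (z-1).re = C-1 := by simp [hzdef]
    have h2 : (z-1).im = S := by simp [hzdef]
    have h3 : Complex.normSq (z-1) = 2*(1-C) := by
      simp [hzdef, Complex.normSq_apply]; linear_combination hCS
    rw [h1, h2, h3]
    simp
    rw [div_eq_iff (by nlinarith : 2*(1-C) ≠ 0)]
    ring
  have hbd : C = -(1/2) → z^2 + z + 1 = 0 := fun hC => aux_hbd C S hCS hC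
  -- bound c, d
  have hdetR : (a:ℝ)*d - b*c = 1 := by exact_mod_cast hdet
  have hτim : τ.im = S / (((c:ℝ)*C+d)^2 + ((c:ℝ)*S)^2) := by
    rw [hτ, Complex.div_im, div_sub_div_same]
    have hnum : ((a:ℂ) * z + b).im * ((c:ℂ)*z + d).re - ((a:ℂ)*z + b).re * ((c:ℂ)*z + d).im = S := by
      simp [hzdef, Complex.add_re, Complex.add_im, Complex.mul_re, Complex.mul_im]
      linear_combination S * hdetR
    have hden : Complex.normSq ((c:ℂ)*z + d) = ((c:ℝ)*C+d)^2 + ((c:ℝ)*S)^2 := by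
      simp [hzdef, Complex.normSq_apply, Complex.add_re, Complex.add_im, Complex.mul_re, Complex.mul_im]
      ring
    rw [hnum, hden]
  set Nsq := ((c:ℝ)*C+d)^2 + ((c:ℝ)*S)^2 with hNdef
  have hNnn : 0 ≤ Nsq := by positivity
  have hNpos : 0 < Nsq := by
    rcases hNnn.lt_or_eq with h | h
    · exact h
    · exfalso; rw [hτim, ← h, div_zero] at him; linarith
  have hNlt : Nsq < 5/2 := by
    rw [hτim, lt_div_iff₀ hNpos] at him
    nlinarith
  have hNeq : Nsq = (c:ℝ)^2 + 2*c*d*C + (d:ℝ)^2 := by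
    rw [hNdef]; linear_combination (c:ℝ)^2 * hCS
  have hC4 : 4*C^2 ≤ 1 := by nlinarith
  have hcr : (c:ℝ)^2 < 4 := by
    nlinarith [sq_nonneg ((c:ℝ) + 4*d*C), mul_nonneg (sq_nonneg (d:ℝ)) (by linarith : (0:ℝ) ≤ 1 - 4*C^2)]
  have hdr : (d:ℝ)^2 < 4 := by
    nlinarith [sq_nonneg ((d:ℝ) + 4*c*C), mul_nonneg (sq_nonneg (c:ℝ)) (by linarith : (0:ℝ) ≤ 1 - 4*C^2)]
  have hc2 : c^2 < 4 := by exact_mod_cast (by push_cast; exact hcr : ((c^2:ℤ):ℝ) < 4)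
  have hd2 : d^2 < 4 := by exact_mod_cast (by push_cast; exact hdr : ((d^2:ℤ):ℝ) < 4)
  have hcl : -1 ≤ c := by nlinarith
  have hcu : c ≤ 1 := by nlinarith
  have hdl : -1 ≤ d := by nlinarith
  have hdu : d ≤ 1 := by nlinarith
  clear hτim hNpos hNlt hNeq hNnn hcr hdr hc2 hd2 hC4 hNdef him hdetR
  interval_cases c <;> interval_cases d
  -- case (-1,-1)
  · have hb : b = a + 1 := by omega
    subst hb
    have key : τ = -(a:ℂ) - 1/(z+1) := by
      rw [hτ]; push_cast
      rw [show ((-1:ℂ))*z + (-1:ℂ) = -(z+1) by ring, div_eq_iff (neg_ne_zero.2 hz1)]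
      field_simp
      ring
    have hrev : τ.re = -(a:ℝ) - 1/2 := by
      rw [key, Complex.sub_re, Complex.neg_re, Complex.intCast_re, hw2]
    rw [hrev, abs_le] at hre
    have ha : a = 0 ∨ a = -1 := by
      have h1 : (0:ℝ) ≤ -(a:ℝ) := by linarith
      have h2 : (-(a:ℝ)) ≤ 1 := by linarith
      have h1' : 0 ≤ -a := by exact_mod_cast h1
      have h2' : -a ≤ 1 := by exact_mod_cast h2
      omega
    rcases ha with ha | ha <;> subst ha
    · right; right; left
      rw [key]; push_cast; rw [neg_div]; ring
    · right; right; right; left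
      rw [key]; push_cast
      rw [eq_div_iff hz1]
      field_simp
      ring
  -- case (-1,0)
  · have hb : b = 1 := by omega
    subst hb
    have key : τ = -(a:ℂ) - 1/z := by
      rw [hτ]; push_cast
      rw [show ((-1:ℂ))*z + (0:ℂ) = -z by ring, div_eq_iff (neg_ne_zero.2 hz0)]
      field_simp
      ring
    have hrev : τ.re = -(a:ℝ) - C := by
      rw [key, Complex.sub_re, Complex.neg_re, Complex.intCast_re, hw1]
    rw [hrev, abs_le] at hre
    have ha : a = 0 ∨ (a = 1 ∧ C = -(1/2)) := by
      have h1 : (-1:ℝ) < (a:ℝ) := by linarith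
      have h2 : (a:ℝ) ≤ 1 := by linarith
      have h1' : -1 < a := by exact_mod_cast h1
      have h2' : a ≤ 1 := by exact_mod_cast h2
      rcases (by omega : a = 0 ∨ a = 1) with h | h
      · exact Or.inl h
      · subst h; right; refine ⟨rfl, ?_⟩
        push_cast at hre
        linarith [hre.1]
    rcases ha with ha | ⟨ha, hC⟩ <;> subst ha
    · right; left
      rw [key]; push_cast; rw [neg_div]; ring
    · left
      have hq := hbd hC
      rw [key]; push_cast
      field_simp
      linear_combination -hq
  -- case (-1,1)
  · have hb : b = 1 - a := by omega
    subst hb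
    have key : τ = -(a:ℂ) - 1/(z-1) := by
      rw [hτ]; push_cast
      rw [show ((-1:ℂ))*z + (1:ℂ) = -(z-1) by ring, div_eq_iff (neg_ne_zero.2 hzm1)]
      field_simp
      ring
    have hrev : τ.re = -(a:ℝ) + 1/2 := by
      rw [key, Complex.sub_re, Complex.neg_re, Complex.intCast_re, hw3]; ring
    rw [hrev, abs_le] at hre
    have ha : a = 0 ∨ a = 1 := by
      have h1 : (-1:ℝ) ≤ -(a:ℝ) := by linarith
      have h2 : (-(a:ℝ)) ≤ 0 := by linarith
      have h1' : -1 ≤ -a := by exact_mod_cast h1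
      have h2' : -a ≤ 0 := by exact_mod_cast h2
      omega
    rcases ha with ha | ha <;> subst ha
    · right; right; right; right; left
      rw [key]; push_cast; rw [neg_div]; ring
    · right; right; right; right; right
      rw [key]; push_cast
      rw [neg_div, eq_comm, neg_eq_iff_eq_neg, eq_comm]
      rw [eq_div_iff hzm1]
      field_simp
      ring
  -- case (0,-1)
  · have ha : a = -1 := by omega
    subst ha
    have key : τ = z - (b:ℂ) := by
      rw [hτ]; push_cast
      rw [show ((0:ℂ))*z + (-1:ℂ) = -1 by ring]
      field_simp
      ring
    have hrev : τ.re = C - (b:ℝ) := by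
      rw [key, Complex.sub_re, Complex.intCast_re, hzre]
    rw [hrev, abs_le] at hre
    have hb : b = 0 ∨ (b = -1 ∧ C = -(1/2)) := by
      have h1 : (-1:ℝ) ≤ (b:ℝ) := by linarith
      have h2 : (b:ℝ) < 1 := by linarith
      have h1' : -1 ≤ b := by exact_mod_cast h1
      have h2' : b < 1 := by exact_mod_cast h2
      rcases (by omega : b = 0 ∨ b = -1) with h | h
      · exact Or.inl h
      · subst h; right; refine ⟨rfl, ?_⟩
        push_cast at hre
        linarith [hre.2]
    rcases hb with hb | ⟨hb, hC⟩ <;> subst hb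
    · left
      rw [key]; push_cast; ring
    · right; left
      have hq := hbd hC
      rw [key]; push_cast
      rw [eq_div_iff hz0]
      linear_combination hq
  -- case (0,0)
  · exfalso; omega
  -- case (0,1)
  · have ha : a = 1 := by omega
    subst ha
    have key : τ = z + (b:ℂ) := by
      rw [hτ]; push_cast
      rw [show ((0:ℂ))*z + (1:ℂ) = 1 by ring]
      field_simp
    have hrev : τ.re = C + (b:ℝ) := by
      rw [key, Complex.add_re, Complex.intCast_re, hzre]
    rw [hrev, abs_le] at hre
    have hb : b = 0 ∨ (b = 1 ∧ C = -(1/2)) := by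
      have h1 : (-1:ℝ) < (b:ℝ) := by linarith
      have h2 : (b:ℝ) ≤ 1 := by linarith
      have h1' : -1 < b := by exact_mod_cast h1
      have h2' : b ≤ 1 := by exact_mod_cast h2
      rcases (by omega : b = 0 ∨ b = 1) with h | h
      · exact Or.inl h
      · subst h; right; refine ⟨rfl, ?_⟩
        push_cast at hre
        linarith [hre.2]
    rcases hb with hb | ⟨hb, hC⟩ <;> subst hb
    · left
      rw [key]; push_cast; ring
    · right; left
      have hq := hbd hC
      rw [key]; push_cast
      rw [eq_div_iff hz0]
      linear_combination hq
  -- case (1,-1)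
  · have hb : b = -a - 1 := by omega
    subst hb
    have key : τ = (a:ℂ) - 1/(z-1) := by
      rw [hτ]; push_cast
      rw [show ((1:ℂ))*z + (-1:ℂ) = z - 1 by ring, div_eq_iff hzm1]
      field_simp
      ring
    have hrev : τ.re = (a:ℝ) + 1/2 := by
      rw [key, Complex.sub_re, Complex.intCast_re, hw3]; ring
    rw [hrev, abs_le] at hre
    have ha : a = 0 ∨ a = -1 := by
      have h1 : (-1:ℝ) ≤ (a:ℝ) := by linarith
      have h2 : (a:ℝ) ≤ 0 := by linarith
      have h1' : -1 ≤ a := by exact_mod_cast h1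
      have h2' : a ≤ 0 := by exact_mod_cast h2
      omega
    rcases ha with ha | ha <;> subst ha
    · right; right; right; right; left
      rw [key]; push_cast; rw [neg_div]; ring
    · right; right; right; right; right
      rw [key]; push_cast
      rw [neg_div, eq_comm, neg_eq_iff_eq_neg, eq_comm]
      rw [eq_div_iff hzm1]
      field_simp
      ring
  -- case (1,0)
  · have hb : b = -1 := by omega
    subst hb
    have key : τ = (a:ℂ) - 1/z := by
      rw [hτ]; push_cast
      rw [show ((1:ℂ))*z + (0:ℂ) = z by ring, div_eq_iff hz0]
      field_simp
      ring
    have hrev : τ.re = (a:ℝ) - C := by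
      rw [key, Complex.sub_re, Complex.intCast_re, hw1]
    rw [hrev, abs_le] at hre
    have ha : a = 0 ∨ (a = -1 ∧ C = -(1/2)) := by
      have h1 : (-1:ℝ) ≤ (a:ℝ) := by linarith
      have h2 : (a:ℝ) < 1 := by linarith
      have h1' : -1 ≤ a := by exact_mod_cast h1
      have h2' : a < 1 := by exact_mod_cast h2
      rcases (by omega : a = 0 ∨ a = -1) with h | h
      · exact Or.inl h
      · subst h; right; refine ⟨rfl, ?_⟩
        push_cast at hre
        linarith [hre.1]
    rcases ha with ha | ⟨ha, hC⟩ <;> subst ha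
    · right; left
      rw [key]; push_cast; rw [neg_div]; ring
    · left
      have hq := hbd hC
      rw [key]; push_cast
      field_simp
      linear_combination -hq
  -- case (1,1)
  · have hb : b = a - 1 := by omega
    subst hb
    have key : τ = (a:ℂ) - 1/(z+1) := by
      rw [hτ]; push_cast
      rw [show ((1:ℂ))*z + (1:ℂ) = z + 1 by ring, div_eq_iff hz1]
      field_simp
      ring
    have hrev : τ.re = (a:ℝ) - 1/2 := by
      rw [key, Complex.sub_re, Complex.intCast_re, hw2]
    rw [hrev, abs_le] at hre
    have ha : a = 0 ∨ a = 1 := by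
      have h1 : (0:ℝ) ≤ (a:ℝ) := by linarith
      have h2 : (a:ℝ) ≤ 1 := by linarith
      have h1' : 0 ≤ a := by exact_mod_cast h1
      have h2' : a ≤ 1 := by exact_mod_cast h2
      omega
    rcases ha with ha | ha <;> subst ha
    · right; right; left
      rw [key]; push_cast; rw [neg_div]; ring
    · right; right; right; left
      rw [key]; push_cast
      rw [eq_div_iff hz1]
      field_simp
      ring
end

section
/- Fix integers m ≥ 1 and even k with k ≥ 8πm/√3. Then the function θ ↦ e^{πm(2 sinθ - tan(θ/2))} / (2 cos(θ/2))^k is nondecreasing on [π/2, 2π/3], and hence is at most its value at θ = 2π/3, which equals e^{πm(√3 - √3)} / 1^k = 1. In particular e^{πm(2 sinθ - tan(θ/2))}/(2cos(θ/2))^k ≤ 1 for all θ ∈ [π/2, 2π/3]. -/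
open Real

lemma key_ineq (c s r : ℝ) (hr : r^2 = 3) (hr1 : 1 ≤ r) (hc1 : 1/2 ≤ c)
    (hs : 0 ≤ s) (hcs : c^2 + s^2 = 1) :
    0 ≤ r * (8*c^4 - 4*c^2 - 1) + 8*c*s := by
  have hc0 : 0 ≤ c := le_trans (by norm_num) hc1
  rcases le_or_gt 0 (8*c^4 - 4*c^2 - 1) with h | h
  · have := mul_nonneg (le_trans zero_le_one hr1) h
    nlinarith [mul_nonneg hc0 hs]
  · have hX : 0 ≤ 1 + 4*c^2 - 8*c^4 := by linarith
    have hsq : (r * (1 + 4*c^2 - 8*c^4))^2 ≤ (8*c*s)^2 := by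
      have : (r * (1 + 4*c^2 - 8*c^4))^2 = 3 * (1 + 4*c^2 - 8*c^4)^2 := by
        rw [mul_pow, hr]
      rw [this]
      nlinarith [sq_nonneg (c^2 - 1/4), sq_nonneg (c^2 - 1/2), sq_nonneg c,
        sq_nonneg (2*c^2-1), sq_nonneg ((c^2-1/4)*(c^2-3/4)),
        mul_nonneg (mul_nonneg hc0 hc0) (sq_nonneg (2*c^2-1))]
    have h1 : 0 ≤ 8*c*s := by positivity
    have h2 : 0 ≤ r * (1 + 4*c^2 - 8*c^4) := mul_nonneg (by linarith) hX
    nlinarith [hsq, h1, h2]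

lemma deriv_lemma (m k : ℕ) (θ : ℝ) (hc : Real.cos (θ/2) ≠ 0) :
    HasDerivAt (fun θ : ℝ => π * m * (2 * Real.sin θ - Real.tan (θ / 2)) -
        k * Real.log (2 * Real.cos (θ / 2)))
      (π * m * (2 * Real.cos θ - 1 / Real.cos (θ/2) ^ 2 * (1/2)) -
        k * ((2 * Real.cos (θ/2))⁻¹ * (2 * (-Real.sin (θ/2) * (1/2))))) θ := by
  have hd2 : HasDerivAt (fun x : ℝ => x / 2) (1/2) θ := by
    simpa using (hasDerivAt_id θ).div_const 2
  have htan : HasDerivAt (fun x : ℝ => Real.tan (x/2)) (1 / Real.cos (θ/2) ^ 2 * (1/2)) θ :=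
    HasDerivAt.comp (h := fun x : ℝ => x / 2) θ (Real.hasDerivAt_tan hc) hd2
  have hcos : HasDerivAt (fun x : ℝ => 2 * Real.cos (x/2)) (2 * (-Real.sin (θ/2) * (1/2))) θ :=
    (HasDerivAt.comp (h := fun x : ℝ => x / 2) θ (Real.hasDerivAt_cos (θ/2)) hd2).const_mul 2
  have hne2 : 2 * Real.cos (θ/2) ≠ 0 := by
    simpa using hc
  have hlog : HasDerivAt (fun x : ℝ => Real.log (2 * Real.cos (x/2)))
      ((2 * Real.cos (θ/2))⁻¹ * (2 * (-Real.sin (θ/2) * (1/2)))) θ :=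
    HasDerivAt.comp (h := fun x : ℝ => 2 * Real.cos (x/2)) θ (Real.hasDerivAt_log hne2) hcos
  exact ((((Real.hasDerivAt_sin θ).const_mul 2).sub htan).const_mul (π * m)).sub
    (hlog.const_mul (k:ℝ))

theorem residue_term_monotone_and_le_one (m k : ℕ) (hm : 1 ≤ m) (hk : Even k)
    (hbig : 8 * π * m / Real.sqrt 3 ≤ (k : ℝ)) :
    MonotoneOn
      (fun θ : ℝ =>
        Real.exp (π * m * (2 * Real.sin θ - Real.tan (θ / 2))) /
          (2 * Real.cos (θ / 2)) ^ k)
      (Set.Icc (π / 2) (2 * π / 3)) ∧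
    ∀ θ ∈ Set.Icc (π / 2) (2 * π / 3),
      Real.exp (π * m * (2 * Real.sin θ - Real.tan (θ / 2))) /
        (2 * Real.cos (θ / 2)) ^ k ≤ 1 := by
  have hπ : 0 < π := Real.pi_pos
  set g : ℝ → ℝ := fun θ => π * m * (2 * Real.sin θ - Real.tan (θ / 2)) -
      k * Real.log (2 * Real.cos (θ / 2)) with hgdef
  have hfacts : ∀ θ ∈ Set.Icc (π/2) (2*π/3),
      1/2 ≤ Real.cos (θ/2) ∧ 0 ≤ Real.sin (θ/2) := by
    intro θ ⟨h1, h2⟩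
    constructor
    · calc (1:ℝ)/2 = Real.cos (π/3) := by rw [Real.cos_pi_div_three]
        _ ≤ Real.cos (θ/2) :=
          Real.cos_le_cos_of_nonneg_of_le_pi (by linarith) (by linarith) (by linarith)
    · exact Real.sin_nonneg_of_nonneg_of_le_pi (by linarith) (by linarith)
  -- g is monotone
  have hgmono : MonotoneOn g (Set.Icc (π/2) (2*π/3)) := by
    apply monotoneOn_of_deriv_nonneg (convex_Icc _ _)
    · intro θ hθ
      have hc := (hfacts θ hθ).1
      exact (deriv_lemma m k θ (by linarith)).differentiableAt.continuousAt.continuousWithinAt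
    · rw [interior_Icc]
      intro θ hθ
      have hc := (hfacts θ (Set.mem_Icc_of_Ioo hθ)).1
      exact (deriv_lemma m k θ (by linarith)).differentiableAt.differentiableWithinAt
    · rw [interior_Icc]
      intro θ hθ
      obtain ⟨hc, hs⟩ := hfacts θ (Set.mem_Icc_of_Ioo hθ)
      have hc0 : (0:ℝ) < Real.cos (θ/2) := by linarith
      rw [(deriv_lemma m k θ (by linarith)).deriv]
      set c := Real.cos (θ/2)
      set s := Real.sin (θ/2)
      have hcs : c^2 + s^2 = 1 := by
        rw [add_comm]; exact Real.sin_sq_add_cos_sq (θ/2)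
      have hcosθ : Real.cos θ = 2*c^2 - 1 := by
        rw [show θ = 2*(θ/2) by ring, Real.cos_two_mul]
      set r := Real.sqrt 3 with hrdef
      have hr : r^2 = 3 := Real.sq_sqrt (by norm_num)
      have hr1 : 1 ≤ r := by nlinarith [Real.sqrt_nonneg 3]
      have key := key_ineq c s r hr hr1 hc hs hcs
      have hm1 : (1:ℝ) ≤ (m:ℝ) := by exact_mod_cast hm
      have hπm : (0:ℝ) < π * m := by nlinarith
      have hk3 : 8 * π * m ≤ (k:ℝ) * r := by
        rw [div_le_iff₀ (by positivity : (0:ℝ) < Real.sqrt 3)] at hbig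
        linarith
      -- combine
      have hks : 8*(π*↑m)*(c*s) ≤ ((k:ℝ)*r)*(c*s) :=
        mul_le_mul_of_nonneg_right (by linarith) (mul_nonneg hc0.le hs)
      have key2 : 0 ≤ π*↑m*(r*(8*c^4-4*c^2-1) + 8*c*s) := mul_nonneg hπm.le key
      have hcomb : 0 ≤ π*↑m*r*(8*c^4-4*c^2-1) + (k:ℝ)*r*(c*s) := by nlinarith
      have hX : 0 ≤ π*↑m*(8*c^4-4*c^2-1) + (k:ℝ)*(c*s) := by
        nlinarith [mul_pos (lt_of_lt_of_le zero_lt_one hr1)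
          (show (0:ℝ) < 1 by norm_num)]
      have hrw : π*↑m*(2*Real.cos θ - 1/c^2*(1/2)) - ↑k*((2*c)⁻¹*(2*(-s*(1/2))))
          = (π*↑m*(8*c^4-4*c^2-1) + (k:ℝ)*(c*s)) / (2*c^2) := by
        rw [hcosθ]
        field_simp
        ring
      rw [hrw]
      positivity
  -- f = exp ∘ g on the set
  have hfe : ∀ θ ∈ Set.Icc (π/2) (2*π/3),
      Real.exp (π * m * (2 * Real.sin θ - Real.tan (θ / 2))) /
        (2 * Real.cos (θ / 2)) ^ k = Real.exp (g θ) := by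
    intro θ hθ
    have hc := (hfacts θ hθ).1
    have hc2 : (0:ℝ) < 2 * Real.cos (θ/2) := by linarith
    have hek : Real.exp (↑k * Real.log (2*Real.cos (θ/2))) = (2*Real.cos (θ/2))^k := by
      rw [← Real.log_pow, Real.exp_log (pow_pos hc2 k)]
    rw [hgdef]
    simp only [Real.exp_sub, hek]
  have hmono : MonotoneOn
      (fun θ : ℝ =>
        Real.exp (π * m * (2 * Real.sin θ - Real.tan (θ / 2))) /
          (2 * Real.cos (θ / 2)) ^ k)
      (Set.Icc (π / 2) (2 * π / 3)) := by
    intro x hx y hy hxy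
    simp only
    rw [hfe x hx, hfe y hy]
    exact Real.exp_le_exp.2 (hgmono hx hy hxy)
  refine ⟨hmono, ?_⟩
  intro θ hθ
  have hend : (2*π/3) ∈ Set.Icc (π/2) (2*π/3) := ⟨by linarith, le_refl _⟩
  have hle := hmono hθ hend hθ.2
  have heval : Real.exp (π * m * (2 * Real.sin (2*π/3) - Real.tan ((2*π/3) / 2))) /
      (2 * Real.cos ((2*π/3) / 2)) ^ k = 1 := by
    have h1 : (2*π/3)/2 = π/3 := by ring
    have h2 : Real.sin (2*π/3) = Real.sqrt 3 / 2 := by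
      rw [show (2*π/3) = π - π/3 by ring, Real.sin_pi_sub, Real.sin_pi_div_three]
    rw [h1, h2, Real.tan_pi_div_three, Real.cos_pi_div_three,
      show 2*(Real.sqrt 3/2) - Real.sqrt 3 = 0 by ring]
    norm_num
  exact le_of_le_of_eq hle heval
end

section
/- Let c(n) be the Fourier coefficients of the modular j-function, satisfying 1 ≤ c(n) ≤ e^{4π√n}/(√2 n^{3/4}) for n ≥ 1, and for a > 0 and integer M ≥ 1 define f_{M,a}(x) = ∑_{n=-1}^{M} c(n) e^{-2πan} e^{2πinx} (with c(-1)=1, c(0)=744). Then for every a > 0, every integer M > 1/a², and every real x: |j(x + ai) - f_{M,a}(x)| < e^{2π(1/a - a(√M - 1/a)²)} √M / (2√2 π (M+1)^{3/4} (a√M - 1)). -/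
open Complex Real


private lemma sqrt_exponent_step (Mr a s : ℝ) (hMr : 0 ≤ Mr) (ha : 0 < a)
    (hs : s = Real.sqrt Mr) (hs0 : 0 < s) :
    ∀ k : ℕ, a * (s - 1/a)^2 + k * ((a*s - 1)/s) ≤ a * (Real.sqrt (Mr + k) - 1/a)^2 := by
  intro k
  induction k with
  | zero => simp [hs]
  | succ k ih =>
    have hk0 : (0:ℝ) ≤ (k:ℝ) := Nat.cast_nonneg k
    have hcast : ((k+1:ℕ):ℝ) = (k:ℝ)+1 := by push_cast; ring
    have hMk : (0:ℝ) ≤ Mr + k := by linarith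
    have hMk1 : (0:ℝ) ≤ Mr + ((k+1:ℕ):ℝ) := by rw [hcast]; linarith
    have hu2 : Real.sqrt (Mr + (k:ℝ)) ^ 2 = Mr + k := Real.sq_sqrt hMk
    have hv2 : Real.sqrt (Mr + ((k+1:ℕ):ℝ)) ^ 2 = Mr + ((k+1:ℕ):ℝ) := Real.sq_sqrt hMk1
    have hsu : s ≤ Real.sqrt (Mr + (k:ℝ)) := by
      rw [hs]; exact Real.sqrt_le_sqrt (by linarith)
    have hd1 : 2 * s * (1/(2*s)) = 1 := by field_simp
    have hvle : Real.sqrt (Mr + ((k+1:ℕ):ℝ)) ≤ Real.sqrt (Mr + (k:ℝ)) + 1/(2*s) := by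
      rw [Real.sqrt_le_iff]
      refine ⟨by positivity, ?_⟩
      rw [hcast]
      nlinarith [hu2, mul_nonneg (sub_nonneg.mpr hsu) (by positivity : (0:ℝ) ≤ 1/(2*s)),
        hd1, sq_nonneg (1/(2*s))]
    have haa : a * (1/a) = 1 := by field_simp
    have hva : a * (Real.sqrt (Mr + ((k+1:ℕ):ℝ)) - 1/a)^2 - a * (Real.sqrt (Mr + (k:ℝ)) - 1/a)^2
        = a * (Real.sqrt (Mr + ((k+1:ℕ):ℝ))^2 - Real.sqrt (Mr + (k:ℝ))^2)
          - 2*(Real.sqrt (Mr + ((k+1:ℕ):ℝ)) - Real.sqrt (Mr + (k:ℝ))) := by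
      linear_combination (2*Real.sqrt (Mr + (k:ℝ)) - 2*Real.sqrt (Mr + ((k+1:ℕ):ℝ))) * haa
    have ha1 : a * (Real.sqrt (Mr + ((k+1:ℕ):ℝ))^2 - Real.sqrt (Mr + (k:ℝ))^2) = a := by
      rw [hu2, hv2, hcast]; ring
    have h2vu : 2*(Real.sqrt (Mr + ((k+1:ℕ):ℝ)) - Real.sqrt (Mr + (k:ℝ))) ≤ 1/s := by
      have h2 : 2*(1/(2*s)) = 1/s := by
        field_simp
      linarith
    have hfrac : (a*s - 1)/s = a - 1/s := by field_simp
    have hkc : ((k+1:ℕ):ℝ) * ((a*s-1)/s) = (k:ℝ)*((a*s-1)/s) + (a - 1/s) := by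
      rw [hcast, hfrac]; ring
    calc a * (s - 1/a)^2 + ((k+1:ℕ):ℝ) * ((a*s-1)/s)
        = (a * (s - 1/a)^2 + (k:ℝ)*((a*s-1)/s)) + (a - 1/s) := by rw [hkc]; ring
      _ ≤ a * (Real.sqrt (Mr + (k:ℝ)) - 1/a)^2 + (a - 1/s) := by linarith [ih]
      _ ≤ a * (Real.sqrt (Mr + ((k+1:ℕ):ℝ)) - 1/a)^2 := by linarith [hva, ha1, h2vu]

/-- Approximation of the `j`-function by a short trigonometric polynomial.
Here `c : ℕ → ℝ` are the Fourier coefficients of `j` (with `c 0 = 744`), and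
`J(τ) = q⁻¹ + 744 + ∑_{n ≥ 1} c(n) qⁿ`. -/
theorem j_trig_poly_approx (c : ℕ → ℝ) (hc0 : c 0 = 744)
    (hc1 : ∀ n : ℕ, 1 ≤ n → 1 ≤ c n)
    (hc2 : ∀ n : ℕ, 1 ≤ n →
      c n ≤ Real.exp (4 * π * Real.sqrt n) / (Real.sqrt 2 * (n : ℝ) ^ ((3 : ℝ) / 4)))
    (J : ℂ → ℂ)
    (hJ : ∀ τ : ℂ, 0 < τ.im → J τ = Complex.exp (-(2 * π * I * τ)) + 744 +
      ∑' n : ℕ, (c (n + 1) : ℂ) * Complex.exp (2 * π * I * τ) ^ (n + 1))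
    (a : ℝ) (ha : 0 < a) (M : ℕ) (hM : 1 / a ^ 2 < (M : ℝ)) (x : ℝ) :
    ‖J ((x : ℂ) + a * I) -
        (Complex.exp (2 * π * a) * Complex.exp (-(2 * π * I * x)) + 744 +
          ∑ n ∈ Finset.range M, (c (n + 1) : ℂ) * Complex.exp (-(2 * π * a * (n + 1))) *
            Complex.exp (2 * π * I * (n + 1) * x))‖ <
      Real.exp (2 * π * (1 / a - a * (Real.sqrt M - 1 / a) ^ 2)) /
          (2 * Real.sqrt 2 * π * ((M : ℝ) + 1) ^ ((3 : ℝ) / 4)) *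
        (Real.sqrt M / (a * Real.sqrt M - 1)) := by
  have hπ : (0:ℝ) < π := Real.pi_pos
  have ha2 : (0:ℝ) < 1 / a ^ 2 := by positivity
  have hM0 : (0:ℝ) < (M:ℝ) := lt_trans ha2 hM
  set s : ℝ := Real.sqrt M with hs_def
  have hs0 : 0 < s := Real.sqrt_pos.mpr hM0
  have hsa : 1 / a < s := by
    have h := Real.sqrt_lt_sqrt ha2.le hM
    rwa [show (1:ℝ)/a^2 = (1/a)^2 by ring, Real.sqrt_sq (by positivity)] at h
  have has : 1 < a * s := by
    rw [div_lt_iff₀ ha] at hsa; nlinarith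
  set t : ℝ := 2 * π * (a * s - 1) / s with ht_def
  have ht0 : 0 < t := by
    apply div_pos _ hs0; nlinarith
  set ρ : ℝ := Real.exp (-t) with hρ_def
  have hρ0 : 0 < ρ := Real.exp_pos _
  have hρ1 : ρ < 1 := by
    rw [hρ_def]
    exact Real.exp_lt_one_iff.mpr (by linarith)
  set K : ℝ := ((M : ℝ) + 1) ^ ((3 : ℝ) / 4) with hK_def
  have hK0 : 0 < K := by positivity
  set B : ℝ := Real.exp (2 * π * (1 / a - a * (s - 1 / a) ^ 2)) / (Real.sqrt 2 * K)
    with hB_def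
  have hB0 : 0 < B := by positivity
  have h2pos : (0:ℝ) < Real.sqrt 2 := Real.sqrt_pos.mpr (by norm_num)
  clear_value s t ρ K B
  -- monotone growth of the exponent along integers `≥ M`
  have hstep : ∀ k : ℕ, a * (s - 1/a)^2 + k * ((a*s - 1)/s)
      ≤ a * (Real.sqrt ((M:ℝ) + k) - 1/a)^2 :=
    sqrt_exponent_step (M:ℝ) a s hM0.le ha hs_def hs0
  -- the per-term bound for the tail
  have key : ∀ k : ℕ, c (k+M+1) * Real.exp (-(2*π*a)) ^ (k+M+1) ≤ B * ρ^(k+1) := by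
    intro k
    set m : ℕ := k + M + 1 with hm_def
    have hm1 : 1 ≤ m := by rw [hm_def]; omega
    clear_value m
    have hmcast : ((m : ℕ) : ℝ) = (M:ℝ) + ((k:ℝ)+1) := by push_cast [hm_def]; ring
    have hm0 : (0:ℝ) ≤ (m:ℝ) := by positivity
    have hsqm : Real.sqrt (m:ℝ) ^ 2 = (m:ℝ) := Real.sq_sqrt hm0
    have hrm : Real.exp (-(2*π*a)) ^ m = Real.exp ((m:ℝ) * (-(2*π*a))) :=
      (Real.exp_nat_mul _ _).symm
    have hr0 : (0:ℝ) < Real.exp (-(2*π*a)) ^ m := by positivity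
    have step1 : c m * Real.exp (-(2*π*a)) ^ m ≤
        Real.exp (4 * π * Real.sqrt m) / (Real.sqrt 2 * (m : ℝ) ^ ((3 : ℝ) / 4))
          * Real.exp (-(2*π*a)) ^ m :=
      mul_le_mul_of_nonneg_right (hc2 m hm1) hr0.le
    have hexp_eq : Real.exp (4 * π * Real.sqrt m) * Real.exp (-(2*π*a)) ^ m
        = Real.exp (2 * π * (1/a - a * (Real.sqrt (m:ℝ) - 1/a)^2)) := by
      rw [hrm, ← Real.exp_add]
      congr 1
      have haa : a * (1/a) = 1 := by field_simp
      have hid : 2 * π * (1/a - a * (Real.sqrt (m:ℝ) - 1/a)^2)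
          = 4 * π * Real.sqrt (m:ℝ) - 2 * π * a * (Real.sqrt (m:ℝ) ^ 2) := by
        linear_combination (4*π*Real.sqrt (m:ℝ) - 2*π*(1/a)) * haa
      rw [hid, hsqm]; ring
    -- exponent comparison
    have hstep' := hstep (k+1)
    have hsm_eq : Real.sqrt ((M:ℝ) + ((k:ℝ)+1)) = Real.sqrt (m:ℝ) := by
      rw [hmcast]
    rw [show (((k+1 : ℕ)):ℝ) = (k:ℝ)+1 by push_cast; ring] at hstep'
    rw [hsm_eq] at hstep'
    have h5 : 2 * π * (1/a - a * (Real.sqrt (m:ℝ) - 1/a)^2)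
        ≤ 2 * π * (1/a - a * (s - 1/a)^2) - ((k:ℝ)+1) * t := by
      rw [ht_def]
      have h6 : ((k:ℝ)+1) * (2 * π * (a * s - 1) / s)
          = 2 * π * (((k:ℝ)+1) * ((a*s-1)/s)) := by ring
      rw [h6]
      nlinarith [hstep', hπ]
    -- denominator comparison
    have hden : K ≤ (m : ℝ) ^ ((3 : ℝ) / 4) := by
      rw [hK_def]
      apply Real.rpow_le_rpow (by positivity) _ (by norm_num)
      rw [hmcast]; push_cast; linarith [Nat.cast_nonneg (α := ℝ) k]
    have step2 : Real.exp (4 * π * Real.sqrt m) / (Real.sqrt 2 * (m : ℝ) ^ ((3 : ℝ) / 4))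
          * Real.exp (-(2*π*a)) ^ m ≤ B * ρ^(k+1) := by
      have hBρ : B * ρ^(k+1) =
          Real.exp (2 * π * (1/a - a * (s - 1/a)^2) - ((k:ℝ)+1) * t) / (Real.sqrt 2 * K) := by
        rw [hB_def, hρ_def, ← Real.exp_nat_mul, div_mul_eq_mul_div, ← Real.exp_add]
        congr 2
        push_cast; ring
      rw [hBρ, div_mul_eq_mul_div, hexp_eq]
      exact div_le_div₀ (Real.exp_pos _).le (Real.exp_le_exp.mpr h5)
        (mul_pos h2pos hK0) (mul_le_mul_of_nonneg_left hden h2pos.le)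
    exact le_trans step1 step2
  -- complex side
  have hiM : (0:ℝ) < ((x:ℂ) + a*I).im := by simpa using ha
  have hexp1 : Complex.exp (-(2 * (π:ℂ) * I * ((x:ℂ) + (a:ℂ) * I)))
      = Complex.exp (2 * (π:ℂ) * (a:ℂ)) * Complex.exp (-(2 * (π:ℂ) * I * (x:ℂ))) := by
    rw [← Complex.exp_add]
    congr 1
    linear_combination (-(2*(π:ℂ)*(a:ℂ))) * Complex.I_sq
  have hterm : ∀ n : ℕ, (c (n+1) : ℂ) * Complex.exp (-(2 * (π:ℂ) * (a:ℂ) * ((n:ℂ) + 1)))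
      * Complex.exp (2 * (π:ℂ) * I * ((n:ℂ) + 1) * (x:ℂ))
      = (c (n+1) : ℂ) * Complex.exp (2 * (π:ℂ) * I * ((x:ℂ) + (a:ℂ) * I)) ^ (n+1) := by
    intro n
    rw [mul_assoc, ← Complex.exp_add, ← Complex.exp_nat_mul]
    congr 2
    push_cast
    linear_combination (-(2*(π:ℂ)*(a:ℂ)*((n:ℂ)+1))) * Complex.I_sq
  -- norms of terms
  have hnorm : ∀ n : ℕ, ‖(c (n+1) : ℂ) * Complex.exp (2 * (π:ℂ) * I * ((x:ℂ) + (a:ℂ) * I)) ^ (n+1)‖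
      = c (n+1) * Real.exp (-(2*π*a)) ^ (n+1) := by
    intro n
    rw [norm_mul, norm_pow, Complex.norm_real, Complex.norm_exp]
    congr 1
    · exact abs_of_nonneg (by linarith [hc1 (n+1) (by omega)])
    · congr 1
      simp [Complex.add_re, Complex.mul_re, Complex.mul_im]
  -- summability
  have htail_le : ∀ n : ℕ,
      ‖(c (n+M+1) : ℂ) * Complex.exp (2 * (π:ℂ) * I * ((x:ℂ) + (a:ℂ) * I)) ^ (n+M+1)‖
        ≤ B * ρ^(n+1) := by
    intro n
    rw [hnorm (n+M)]  -- careful: indices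
    exact key n
  have hgeo : Summable (fun n : ℕ => B * ρ^(n+1)) := by
    have h := (summable_geometric_of_lt_one hρ0.le hρ1).mul_left (B * ρ)
    apply h.congr
    intro n
    rw [pow_succ]; ring
  have hsum_tail : Summable (fun n : ℕ =>
      ‖(c (n+M+1) : ℂ) * Complex.exp (2 * (π:ℂ) * I * ((x:ℂ) + (a:ℂ) * I)) ^ (n+M+1)‖) :=
    hgeo.of_nonneg_of_le (fun n => norm_nonneg _) htail_le
  have hsumf : Summable (fun n : ℕ =>
      (c (n+1) : ℂ) * Complex.exp (2 * (π:ℂ) * I * ((x:ℂ) + (a:ℂ) * I)) ^ (n+1)) := by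
    rw [← summable_nat_add_iff M]
    exact Summable.of_norm hsum_tail
  -- rewrite the goal
  rw [hJ _ hiM, hexp1]
  rw [show (∑ n ∈ Finset.range M, (c (n + 1) : ℂ) * Complex.exp (-(2 * (π:ℂ) * (a:ℂ) * ((n:ℂ) + 1))) *
      Complex.exp (2 * (π:ℂ) * I * ((n:ℂ) + 1) * (x:ℂ)))
      = ∑ n ∈ Finset.range M, (c (n+1) : ℂ) * Complex.exp (2 * (π:ℂ) * I * ((x:ℂ) + (a:ℂ) * I)) ^ (n+1)
      from Finset.sum_congr rfl fun n _ => hterm n]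
  rw [add_sub_add_left_eq_sub]
  have hTS : (∑' n : ℕ, (c (n+1) : ℂ) * Complex.exp (2 * (π:ℂ) * I * ((x:ℂ) + (a:ℂ) * I)) ^ (n+1))
      - ∑ n ∈ Finset.range M, (c (n+1) : ℂ) * Complex.exp (2 * (π:ℂ) * I * ((x:ℂ) + (a:ℂ) * I)) ^ (n+1)
      = ∑' n : ℕ, (c (n+M+1) : ℂ) * Complex.exp (2 * (π:ℂ) * I * ((x:ℂ) + (a:ℂ) * I)) ^ (n+M+1) := by
    rw [← Summable.sum_add_tsum_nat_add M hsumf, add_sub_cancel_left]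
  rw [hTS]
  -- final estimate
  calc ‖∑' n : ℕ, (c (n+M+1) : ℂ) * Complex.exp (2 * (π:ℂ) * I * ((x:ℂ) + (a:ℂ) * I)) ^ (n+M+1)‖
      ≤ ∑' n : ℕ, ‖(c (n+M+1) : ℂ) * Complex.exp (2 * (π:ℂ) * I * ((x:ℂ) + (a:ℂ) * I)) ^ (n+M+1)‖ :=
        norm_tsum_le_tsum_norm hsum_tail
    _ ≤ ∑' n : ℕ, B * ρ^(n+1) := Summable.tsum_le_tsum htail_le hsum_tail hgeo
    _ = B * ρ * (1 - ρ)⁻¹ := by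
        rw [show (fun n : ℕ => B * ρ^(n+1)) = (fun n : ℕ => (B * ρ) * ρ^n) from
          funext fun n => by rw [pow_succ]; ring]
        rw [tsum_mul_left, tsum_geometric_of_lt_one hρ0.le hρ1]
    _ < Real.exp (2 * π * (1 / a - a * (s - 1 / a) ^ 2)) /
          (2 * Real.sqrt 2 * π * K) * (s / (a * s - 1)) := by
        have hRHS : Real.exp (2 * π * (1 / a - a * (s - 1 / a) ^ 2)) /
            (2 * Real.sqrt 2 * π * K) * (s / (a * s - 1)) = B / t := by
          rw [hB_def, ht_def, div_div_div_eq, div_mul_div_comm]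
          congr 1
          ring
        rw [hRHS]
        -- B * ρ / (1-ρ) < B / t  since  t < e^t - 1
        have hρe : ρ * Real.exp t = 1 := by
          rw [hρ_def, ← Real.exp_add]; simp
        have h1ρ : 0 < 1 - ρ := by linarith
        have hlt : t + 1 < Real.exp t := Real.add_one_lt_exp ht0.ne'
        rw [← div_eq_mul_inv, div_lt_div_iff₀ h1ρ ht0]
        have h7 : (t + 1) * ρ < Real.exp t * ρ := mul_lt_mul_of_pos_right hlt hρ0
        have h8 : t * ρ < 1 - ρ := by linarith [h7, hρe]
        have h9 := mul_lt_mul_of_pos_left h8 hB0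
        linarith [h9]
end
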